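/- arXiv:2101.11397 — 7 statements merged into one kernel-verified Lean document; each statement's English description precedes it below -/
import Mathlib

section
/- Let μ : (0,∞) → [0,∞) be integrable and non-increasing, and for s ∈ ℝ, s ≠ 0, define ℓ(is) = 1 + (1/(is)) ∫_0^∞ μ(r)(1 - e^{-isr}) dr. Then Re ℓ(is) ≥ 1 for all s ≠ 0. -/
open MeasureTheory Set Complex Real Filter

-- key lemma: for s > 0, the sine integral is nonnegative
lemma key (μ : ℝ → ℝ) (hpos : ∀ r ∈ Ioi (0 : ℝ), 0 ≤ μ r)
    (hmono : AntitoneOn μ (Ioi 0))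
    (hint : IntegrableOn μ (Ioi 0))
    (s : ℝ) (hs : 0 < s) :
    0 ≤ ∫ r in Ioi (0 : ℝ), μ r * Real.sin (s * r) := by
  set T : ℝ := π / s with hT
  have hT0 : 0 < T := div_pos Real.pi_pos hs
  set P : ℝ := 2 * T with hP
  have hP0 : 0 < P := by positivity
  set g : ℝ → ℝ := fun r => μ r * Real.sin (s * r) with hg
  have hgint : IntegrableOn g (Ioi 0) := by
    refine Integrable.mono hint
      (hint.aestronglyMeasurable.mul (Real.continuous_sin.comp (by fun_prop)).aestronglyMeasurable)
      (ae_of_all _ fun r => ?_)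
    simp only [g, Real.norm_eq_abs, abs_mul]
    exact mul_le_of_le_one_right (abs_nonneg _) (abs_sin_le_one _)
  -- integrability of translated pieces
  have hIntvl : ∀ c : ℝ, 0 ≤ c →
      IntervalIntegrable (fun u => μ (c + u) * Real.sin (s * u)) volume 0 T := by
    intro c hc
    have h1 : IntegrableOn μ (Ioc c (c + T)) :=
      hint.mono_set (fun x hx => lt_of_le_of_lt hc hx.1)
    have h2 : IntervalIntegrable μ volume c (c + T) := by
      rw [intervalIntegrable_iff_integrableOn_Ioc_of_le (by linarith)]; exact h1
    have h3 := h2.comp_add_left c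
    simp only [sub_self, add_sub_cancel_left] at h3
    exact h3.mul_continuousOn (Real.continuous_sin.comp (by fun_prop)).continuousOn
  -- each block is nonnegative
  have hblock : ∀ k : ℕ, 0 ≤ ∫ r in Ioc (k * P) ((k + 1) * P), g r := by
    intro k
    set a : ℝ := k * P with ha
    have ha0 : 0 ≤ a := by positivity
    have hab : a ≤ (k + 1) * P := by nlinarith
    rw [← intervalIntegral.integral_of_le hab]
    have e1 : ((k : ℝ) + 1) * P = a + P := by ring
    rw [e1]
    have e2 : (∫ r in a..a + P, g r) = ∫ u in (0:ℝ)..P, g (a + u) := by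
      rw [intervalIntegral.integral_comp_add_left g a, add_zero]
    rw [e2]
    have hsT : s * T = π := by rw [hT]; field_simp
    have hsin : ∀ u : ℝ, Real.sin (s * (a + u)) = Real.sin (s * u) := by
      intro u
      have : s * (a + u) = s * u + k * (2 * π) := by
        have h2 : s * a = k * (2 * π) := by rw [ha, hP, ← hsT]; ring
        rw [mul_add, h2]; ring
      rw [this, Real.sin_add_nat_mul_two_pi]
    have e3 : ∀ u : ℝ, g (a + u) = μ (a + u) * Real.sin (s * u) := by
      intro u; simp only [g, hsin]
    simp only [e3]
    have hPT : P = T + T := by rw [hP]; ring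
    rw [hPT, ← intervalIntegral.integral_add_adjacent_intervals (b := T)
      (hIntvl a ha0) ?_]
    · -- second piece equals minus the translated one
      have e4 : (∫ u in T..T + T, μ (a + u) * Real.sin (s * u))
          = ∫ v in (0:ℝ)..T, μ (a + (T + v)) * Real.sin (s * (T + v)) := by
        rw [intervalIntegral.integral_comp_add_left (fun u => μ (a + u) * Real.sin (s * u)) T,
          add_zero]
      have hsinT : ∀ v : ℝ, Real.sin (s * (T + v)) = -Real.sin (s * v) := by
        intro v
        have : s * (T + v) = s * v + π := by rw [mul_add, hsT]; ring
        rw [this, Real.sin_add_pi]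
      have e5 : (∫ v in (0:ℝ)..T, μ (a + (T + v)) * Real.sin (s * (T + v)))
          = -∫ v in (0:ℝ)..T, μ ((a + T) + v) * Real.sin (s * v) := by
        rw [← intervalIntegral.integral_neg]
        congr 1; ext v; rw [hsinT]; ring_nf
      rw [e4, e5]
      rw [← sub_eq_add_neg, ← ge_iff_le, ge_iff_le, sub_nonneg]
      refine intervalIntegral.integral_mono_on hT0.le (hIntvl (a + T) (by linarith))
        (hIntvl a ha0) fun u hu => ?_
      rcases eq_or_lt_of_le hu.1 with h0 | h0
      · simp [← h0]
      rcases eq_or_lt_of_le hu.2 with hTu | hTu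
      · have : s * u = π := by rw [hTu]; exact hsT
        simp [this]
      · refine mul_le_mul_of_nonneg_right ?_ ?_
        · exact hmono (by simp [mem_Ioi]; linarith) (by simp [mem_Ioi]; linarith)
            (by linarith)
        · refine Real.sin_nonneg_of_nonneg_of_le_pi (by positivity) ?_
          calc s * u ≤ s * T := by nlinarith
            _ = π := hsT
    · have h := ((hIntvl (a + T) (by linarith)).comp_sub_right T).neg
      simp only [zero_add] at h
      have hfun : (fun u => μ (a + u) * Real.sin (s * u))
          = fun u => -(μ (a + T + (u - T)) * Real.sin (s * (u - T))) := by
        ext u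
        rw [show a + T + (u - T) = a + u by ring,
          show s * (u - T) = s * u - π by rw [mul_sub, hsT], Real.sin_sub_pi]
        ring
      rw [hfun]
      exact h
  -- partial integrals are nonnegative
  have hpart : ∀ N : ℕ, 0 ≤ ∫ r in Ioc (0 : ℝ) (N * P), g r := by
    intro N
    induction N with
    | zero => simp
    | succ N ih =>
      have h01 : (0 : ℝ) ≤ N * P := by positivity
      have h12 : (N : ℝ) * P ≤ (N + 1) * P := by nlinarith
      have hu : Ioc (0 : ℝ) (N * P) ∪ Ioc ((N : ℝ) * P) ((N + 1) * P)
          = Ioc (0 : ℝ) ((N + 1) * P) := Ioc_union_Ioc_eq_Ioc h01 h12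
      have hcast : ((N + 1 : ℕ) : ℝ) * P = ((N : ℝ) + 1) * P := by push_cast; ring
      rw [hcast, ← hu, setIntegral_union (Ioc_disjoint_Ioc_of_le le_rfl) measurableSet_Ioc
        (hgint.mono_set (Ioc_subset_Ioi_self)) (hgint.mono_set (fun x hx => lt_of_le_of_lt h01 hx.1))]
      exact add_nonneg ih (hblock N)
  -- pass to the limit
  have hU : (⋃ N : ℕ, Ioc (0 : ℝ) (N * P)) = Ioi 0 := by
    ext x
    simp only [mem_iUnion, mem_Ioc, mem_Ioi]
    constructor
    · rintro ⟨N, h1, _⟩; exact h1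
    · intro hx
      obtain ⟨N, hN⟩ := exists_nat_ge (x / P)
      exact ⟨N, hx, by rwa [div_le_iff₀ hP0] at hN⟩
  have hmonoS : Monotone fun N : ℕ => Ioc (0 : ℝ) (N * P) := fun m n hmn =>
    Ioc_subset_Ioc le_rfl (mul_le_mul_of_nonneg_right (Nat.cast_le.2 hmn) hP0.le)
  have htend := tendsto_setIntegral_of_monotone (fun N : ℕ => measurableSet_Ioc)
    hmonoS (by rw [hU]; exact hgint)
  rw [hU] at htend
  exact ge_of_tendsto htend (Filter.Eventually.of_forall hpart)

/-- For `μ : (0,∞) → [0,∞)` integrable and non-increasing, and `s ≠ 0`, defining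
`ℓ(is) = 1 + (1/(is)) ∫_0^∞ μ(r)(1 - e^{-isr}) dr`, one has `Re ℓ(is) ≥ 1`. -/
theorem stmt2 (μ : ℝ → ℝ) (hpos : ∀ r ∈ Ioi (0 : ℝ), 0 ≤ μ r)
    (hmono : AntitoneOn μ (Ioi 0))
    (hint : IntegrableOn μ (Ioi 0))
    (s : ℝ) (hs : s ≠ 0) :
    1 ≤ (1 + (1 / (Complex.I * s)) *
      ∫ r in Ioi (0 : ℝ), (μ r : ℂ) * (1 - Complex.exp (-(Complex.I * s) * r))).re := by
  set f : ℝ → ℂ := fun r => (μ r : ℂ) * (1 - Complex.exp (-(Complex.I * s) * r)) with hf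
  have habs : ∀ r : ℝ, ‖Complex.exp (-(Complex.I * ↑s) * ↑r)‖ = 1 := by
    intro r
    rw [Complex.norm_exp]
    norm_num [Complex.mul_re]
  have hnorm : ∀ r : ℝ, ‖f r‖ ≤ ‖2 * μ r‖ := by
    intro r
    have h2 : ‖(1 : ℂ) - Complex.exp (-(Complex.I * ↑s) * ↑r)‖ ≤ 2 := by
      refine (norm_sub_le _ _).trans ?_
      rw [habs r]
      norm_num
    calc ‖f r‖ = |μ r| * ‖(1 : ℂ) - Complex.exp (-(Complex.I * ↑s) * ↑r)‖ := by
          simp [hf]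
      _ ≤ |μ r| * 2 := mul_le_mul_of_nonneg_left h2 (abs_nonneg _)
      _ ≤ ‖2 * μ r‖ := by rw [Real.norm_eq_abs, abs_mul]; norm_num [mul_comm]
  have hfmeas : AEStronglyMeasurable f (volume.restrict (Ioi (0 : ℝ))) := by
    refine AEStronglyMeasurable.mul ?_ ?_
    · exact Complex.continuous_ofReal.comp_aestronglyMeasurable hint.aestronglyMeasurable
    · exact (Continuous.aestronglyMeasurable (by fun_prop))
  have hfint : IntegrableOn f (Ioi 0) :=
    Integrable.mono (hint.const_mul 2) hfmeas (ae_of_all _ hnorm)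
  have him : (∫ r in Ioi (0 : ℝ), f r).im = ∫ r in Ioi (0 : ℝ), μ r * Real.sin (s * r) := by
    have h1 := integral_im (𝕜 := ℂ) hfint
    simp only [RCLike.im_to_complex] at h1
    rw [← h1]
    congr 1
    ext r
    simp [hf, Complex.exp_im, Complex.exp_re, Complex.mul_re, Complex.mul_im]
  have hre : (1 + (1 / (Complex.I * ↑s)) * ∫ r in Ioi (0 : ℝ), f r).re
      = 1 + (∫ r in Ioi (0 : ℝ), μ r * Real.sin (s * r)) / s := by
    rw [← him]
    have hdiv : (1 / (Complex.I * ↑s) : ℂ) = (↑(s⁻¹) : ℂ) * (-Complex.I) := by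
      rw [one_div, mul_inv, Complex.inv_I]
      push_cast
      ring
    rw [hdiv, Complex.add_re, Complex.one_re]
    congr 1
    rw [div_eq_inv_mul]
    simp [Complex.mul_re, Complex.mul_im]
  rw [hre]
  have hnn : 0 ≤ (∫ r in Ioi (0 : ℝ), μ r * Real.sin (s * r)) / s := by
    rcases hs.lt_or_gt with hneg | hposs
    · have hkey := key μ hpos hmono hint (-s) (by linarith)
      have heq : (∫ r in Ioi (0 : ℝ), μ r * Real.sin (s * r))
          = -∫ r in Ioi (0 : ℝ), μ r * Real.sin (-s * r) := by
        rw [← integral_neg]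
        congr 1
        ext r
        rw [neg_mul, Real.sin_neg]
        ring
      rw [heq, neg_div]
      have h := div_nonneg hkey (by linarith : (0 : ℝ) ≤ -s)
      rwa [div_neg] at h
    · exact div_nonneg (key μ hpos hmono hint s hposs) hposs.le
  linarith
end

section
/- For a, b > 0, the complex number tanh(a + ib) = (sinh(2a) + i sin(2b)) / (cosh(2a) + cos(2b)) satisfies |arg tanh(a+ib)| < arctan(b/a). In particular, |arg tanh z| < arg z whenever z lies in the open first quadrant with Re z > 0 and Im z > 0. -/
open Complex

lemma aux_arg {z : ℂ} (h : 0 < z.re) : Complex.arg z = Real.arctan (z.im / z.re) := by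
  have h2 : |Complex.arg z| < Real.pi / 2 :=
    Complex.abs_arg_lt_pi_div_two_iff.2 (Or.inl h)
  rw [← Complex.tan_arg, Real.arctan_tan (by linarith [(abs_lt.1 h2).1]) (abs_lt.1 h2).2]

lemma aux_key (a b : ℝ) (ha : 0 < a) (hb : 0 < b) :
    0 < Real.cosh (2 * a) + Real.cos (2 * b) ∧
    Complex.tanh (a + b * Complex.I) =
      ((Real.sinh (2 * a) : ℂ) + (Real.sin (2 * b) : ℂ) * Complex.I) /
        ((Real.cosh (2 * a) : ℂ) + (Real.cos (2 * b) : ℂ)) ∧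
    |Complex.arg (Complex.tanh (a + b * Complex.I))| < Real.arctan (b / a) := by
  set z : ℂ := (a : ℂ) + b * I with hz
  set w : ℂ := (a : ℂ) - b * I with hw
  have hD : 0 < Real.cosh (2 * a) + Real.cos (2 * b) := by
    have h1 : (1 : ℝ) < Real.cosh (2 * a) := Real.one_lt_cosh.2 (by positivity)
    nlinarith [Real.neg_one_le_cos (2 * b)]
  have hzw : z + w = ((2 * a : ℝ) : ℂ) := by push_cast; ring
  have hzw2 : z - w = ((2 * b : ℝ) : ℂ) * I := by push_cast; ring
  have e1 : Complex.sinh z * Complex.cosh w + Complex.cosh z * Complex.sinh w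
      = ((Real.sinh (2 * a) : ℝ) : ℂ) := by
    rw [← Complex.sinh_add, hzw, Complex.ofReal_sinh]
  have e2 : Complex.sinh z * Complex.cosh w - Complex.cosh z * Complex.sinh w
      = (Real.sin (2 * b) : ℂ) * I := by
    rw [← Complex.sinh_sub, hzw2, Complex.sinh_mul_I, Complex.ofReal_sin]
  have e3 : Complex.cosh z * Complex.cosh w + Complex.sinh z * Complex.sinh w
      = ((Real.cosh (2 * a) : ℝ) : ℂ) := by
    rw [← Complex.cosh_add, hzw, Complex.ofReal_cosh]
  have e4 : Complex.cosh z * Complex.cosh w - Complex.sinh z * Complex.sinh w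
      = (Real.cos (2 * b) : ℂ) := by
    rw [← Complex.cosh_sub, hzw2, Complex.cosh_mul_I, Complex.ofReal_cos]
  have hnum : Complex.sinh z * Complex.cosh w
      = ((Real.sinh (2 * a) : ℂ) + (Real.sin (2 * b) : ℂ) * I) / 2 := by
    linear_combination (e1 + e2) / 2
  have hden : Complex.cosh z * Complex.cosh w
      = ((Real.cosh (2 * a) : ℂ) + (Real.cos (2 * b) : ℂ)) / 2 := by
    linear_combination (e3 + e4) / 2
  have hDne : ((Real.cosh (2 * a) : ℂ) + (Real.cos (2 * b) : ℂ)) ≠ 0 := by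
    rw [← Complex.ofReal_add]
    exact_mod_cast hD.ne'
  have hprod_ne : Complex.cosh z * Complex.cosh w ≠ 0 := by
    rw [hden]; exact div_ne_zero hDne two_ne_zero
  have hcz : Complex.cosh z ≠ 0 := fun h => hprod_ne (by rw [h, zero_mul])
  have hcw : Complex.cosh w ≠ 0 := fun h => hprod_ne (by rw [h, mul_zero])
  have hform : Complex.tanh z =
      ((Real.sinh (2 * a) : ℂ) + (Real.sin (2 * b) : ℂ) * I) /
        ((Real.cosh (2 * a) : ℂ) + (Real.cos (2 * b) : ℂ)) := by
    have hq : ∀ x y : ℂ, y ≠ 0 → x / 2 / (y / 2) = x / y := by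
      intro x y hy; field_simp
    rw [Complex.tanh_eq_sinh_div_cosh, ← mul_div_mul_right _ _ hcw, hnum, hden, hq _ _ hDne]
  refine ⟨hD, hform, ?_⟩
  -- arg computation
  set N : ℂ := (Real.sinh (2 * a) : ℂ) + (Real.sin (2 * b) : ℂ) * I with hN
  have hS : 0 < Real.sinh (2 * a) := Real.sinh_pos_iff.2 (by positivity)
  have harg : Complex.arg (Complex.tanh z) = Real.arctan (Real.sin (2 * b) / Real.sinh (2 * a)) := by
    have hcast : ((Real.cosh (2 * a) + Real.cos (2 * b) : ℝ) : ℂ)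
        = (Real.cosh (2 * a) : ℂ) + (Real.cos (2 * b) : ℂ) := Complex.ofReal_add _ _
    have h1 : Complex.tanh z = (((Real.cosh (2 * a) + Real.cos (2 * b))⁻¹ : ℝ) : ℂ) * N := by
      rw [hform, Complex.ofReal_inv, hcast, inv_mul_eq_div]
    have hNre : N.re = Real.sinh (2 * a) := by
      simp only [hN, Complex.add_re, Complex.mul_re, Complex.ofReal_re, Complex.ofReal_im,
        Complex.I_re, Complex.I_im, mul_zero, zero_mul, mul_one, sub_zero, add_zero, zero_sub]
    have hNim : N.im = Real.sin (2 * b) := by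
      simp only [hN, Complex.add_im, Complex.mul_im, Complex.ofReal_re, Complex.ofReal_im,
        Complex.I_re, Complex.I_im, mul_zero, zero_mul, mul_one, zero_add, add_zero]
    rw [h1, Complex.arg_real_mul _ (inv_pos.2 hD), aux_arg (by rw [hNre]; exact hS), hNre, hNim]
  rw [harg]
  have habs : |Real.arctan (Real.sin (2 * b) / Real.sinh (2 * a))|
      = Real.arctan (|Real.sin (2 * b)| / Real.sinh (2 * a)) := by
    rcases le_or_gt 0 (Real.sin (2 * b)) with h | h
    · have h0 : (0:ℝ) ≤ Real.arctan (Real.sin (2 * b) / Real.sinh (2 * a)) := by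
        simpa using Real.arctan_strictMono.monotone (div_nonneg h hS.le)
      rw [_root_.abs_of_nonneg h, _root_.abs_of_nonneg h0]
    · have h0 : Real.arctan (Real.sin (2 * b) / Real.sinh (2 * a)) < 0 := by
        simpa using Real.arctan_strictMono (div_neg_of_neg_of_pos h hS)
      rw [_root_.abs_of_neg h, _root_.abs_of_neg h0, ← Real.arctan_neg, neg_div]
  rw [habs]
  apply Real.arctan_strictMono
  rw [div_lt_div_iff₀ hS ha]
  have h1 : |Real.sin (2 * b)| < 2 * b := by
    have := Real.abs_sin_lt_abs (x := 2 * b) (by positivity)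
    rwa [abs_of_pos (by positivity : (0:ℝ) < 2 * b)] at this
  have h2 : 2 * a < Real.sinh (2 * a) := Real.self_lt_sinh_iff.2 (by positivity)
  nlinarith

/-- For `a, b > 0`, `tanh(a+ib) = (sinh(2a) + i sin(2b))/(cosh(2a) + cos(2b))` with
positive denominator, and `|arg tanh(a+ib)| < arctan(b/a)`.  In particular
`|arg tanh z| < arg z` for `z` in the open first quadrant. -/
theorem stmt6 (a b : ℝ) (ha : 0 < a) (hb : 0 < b) :
    0 < Real.cosh (2 * a) + Real.cos (2 * b) ∧
    Complex.tanh (a + b * Complex.I) =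
      ((Real.sinh (2 * a) : ℂ) + (Real.sin (2 * b) : ℂ) * Complex.I) /
        ((Real.cosh (2 * a) : ℂ) + (Real.cos (2 * b) : ℂ)) ∧
    |Complex.arg (Complex.tanh (a + b * Complex.I))| < Real.arctan (b / a) ∧
    ∀ z : ℂ, 0 < z.re → 0 < z.im →
      |Complex.arg (Complex.tanh z)| < Complex.arg z := by
  obtain ⟨h1, h2, h3⟩ := aux_key a b ha hb
  refine ⟨h1, h2, h3, fun z hre him => ?_⟩
  obtain ⟨-, -, h⟩ := aux_key z.re z.im hre him
  rw [Complex.re_add_im] at h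
  rwa [aux_arg hre]
end

section
/- Let μ : (0,∞) → [0,∞) be non-increasing and integrable, let H be a Hilbert space, and let M = L²_μ(0,∞; H) be the weighted Bochner space with norm ‖η‖² = ∫_0^∞ μ(s)‖η(s)‖²_H ds. For η̂ ∈ M define ξ̂(s) = ∫_0^s e^{-(s-σ)} η̂(σ) dσ. Then ξ̂ ∈ M and ‖ξ̂‖_M ≤ ‖η̂‖_M. -/
open MeasureTheory Set
open scoped ENNReal

set_option maxHeartbeats 1000000 in
/-- Let `μ : (0,∞) → [0,∞)` be non-increasing and integrable, `H` a complex Hilbert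
space, and `M = L²_μ(0,∞; H)`.  For `η̂ ∈ M`, the function
`ξ̂(s) = ∫_0^s e^{-(s-σ)} η̂(σ) dσ` belongs to `M` and `‖ξ̂‖_M ≤ ‖η̂‖_M`. -/
theorem stmt9 {H : Type*} [NormedAddCommGroup H] [InnerProductSpace ℂ H] [CompleteSpace H]
    (μ : ℝ → ℝ) (hpos : ∀ s ∈ Ioi (0 : ℝ), 0 ≤ μ s)
    (hmono : AntitoneOn μ (Ioi 0))
    (hint : IntegrableOn μ (Ioi 0))
    (η : ℝ → H)
    (hmeas : AEStronglyMeasurable η (volume.restrict (Ioi 0)))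
    (hη : IntegrableOn (fun s => μ s * ‖η s‖ ^ 2) (Ioi 0)) :
    IntegrableOn
        (fun s => μ s * ‖∫ σ in (0 : ℝ)..s, Real.exp (-(s - σ)) • η σ‖ ^ 2) (Ioi 0) ∧
      (∫ s in Ioi (0 : ℝ), μ s * ‖∫ σ in (0 : ℝ)..s, Real.exp (-(s - σ)) • η σ‖ ^ 2) ≤
        ∫ s in Ioi (0 : ℝ), μ s * ‖η s‖ ^ 2 := by
  -- measurable versions of η and μ
  obtain ⟨η1, hη1m, hη1e⟩ :
      ∃ η1 : ℝ → H, StronglyMeasurable η1 ∧ η =ᵐ[volume.restrict (Ioi 0)] η1 :=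
    ⟨(Ioi (0:ℝ)).indicator (hmeas.mk η),
      hmeas.stronglyMeasurable_mk.indicator measurableSet_Ioi,
      hmeas.ae_eq_mk.trans (indicator_ae_eq_restrict measurableSet_Ioi).symm⟩
  obtain ⟨μ1, hμ1m, hμ1e⟩ :
      ∃ μ1 : ℝ → ℝ, Measurable μ1 ∧ μ =ᵐ[volume.restrict (Ioi 0)] μ1 :=
    ⟨(Ioi (0:ℝ)).indicator (hint.1.mk μ),
      (hint.1.stronglyMeasurable_mk.measurable).indicator measurableSet_Ioi,
      hint.1.ae_eq_mk.trans (indicator_ae_eq_restrict measurableSet_Ioi).symm⟩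
  set h1 : ℝ → ℝ≥0∞ := fun σ => ENNReal.ofReal (μ1 σ * ‖η1 σ‖ ^ 2) with hh1def
  have hh1m : Measurable h1 :=
    (hμ1m.mul ((hη1m.norm.measurable).pow_const 2)).ennreal_ofReal
  set ξ1 : ℝ → H := fun s => ∫ σ in Ioo (0:ℝ) s, Real.exp (-(s - σ)) • η1 σ with hξ1def
  -- interval integral in the goal equals ξ1 on Ioi 0
  have hξeq : ∀ s ∈ Ioi (0:ℝ),
      (∫ σ in (0 : ℝ)..s, Real.exp (-(s - σ)) • η σ) = ξ1 s := by
    intro s hs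
    rw [intervalIntegral.integral_of_le (le_of_lt hs), integral_Ioc_eq_integral_Ioo, hξ1def]
    refine integral_congr_ae ?_
    filter_upwards [ae_restrict_of_ae_restrict_of_subset Ioo_subset_Ioi_self hη1e] with σ hσ
    rw [hσ]
  -- ξ1 is strongly measurable
  have hξ1meas : StronglyMeasurable ξ1 := by
    have hSm : MeasurableSet {q : ℝ × ℝ | 0 < q.2 ∧ q.2 < q.1} :=
      (measurableSet_lt measurable_const measurable_snd).inter
        (measurableSet_lt measurable_snd measurable_fst)
    have hf : StronglyMeasurable fun q : ℝ × ℝ =>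
        ({q : ℝ × ℝ | 0 < q.2 ∧ q.2 < q.1}).indicator
          (fun q : ℝ × ℝ => Real.exp (-(q.1 - q.2)) • η1 q.2) q := by
      refine StronglyMeasurable.indicator ?_ hSm
      exact ((Real.continuous_exp.comp
        (continuous_fst.sub continuous_snd).neg).stronglyMeasurable).smul
        (hη1m.comp_measurable measurable_snd)
    have heq : ξ1 = fun s => ∫ σ, ({q : ℝ × ℝ | 0 < q.2 ∧ q.2 < q.1}).indicator
          (fun q : ℝ × ℝ => Real.exp (-(q.1 - q.2)) • η1 q.2) (s, σ) := by
      funext s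
      show (∫ σ in Ioo (0:ℝ) s, Real.exp (-(s - σ)) • η1 σ) = _
      rw [← integral_indicator measurableSet_Ioo]
      congr 1
    rw [heq]
    exact hf.integral_prod_right'
  -- pointwise key bound
  have key : ∀ s ∈ Ioi (0:ℝ),
      ENNReal.ofReal (μ s * ‖ξ1 s‖ ^ 2)
        ≤ ∫⁻ σ in Ioo (0:ℝ) s, ENNReal.ofReal (Real.exp (-(s - σ))) * h1 σ := by
    intro s hs
    have hcg : (∫⁻ σ in Ioo (0:ℝ) s, ENNReal.ofReal (Real.exp (-(s - σ))) * h1 σ)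
        = ∫⁻ σ in Ioo (0:ℝ) s,
            ENNReal.ofReal (Real.exp (-(s - σ))) * ENNReal.ofReal (μ σ * ‖η1 σ‖ ^ 2) := by
      refine lintegral_congr_ae ?_
      filter_upwards [ae_restrict_of_ae_restrict_of_subset Ioo_subset_Ioi_self hμ1e] with σ hσ
      rw [hh1def, hσ]
    rw [hcg]
    show ENNReal.ofReal (μ s * ‖∫ σ in Ioo (0:ℝ) s, Real.exp (-(s - σ)) • η1 σ‖ ^ 2) ≤ _
    set ν := volume.restrict (Ioo (0:ℝ) s) with hν
    set w : ℝ → ℝ≥0∞ := fun σ => ENNReal.ofReal (Real.exp (-(s - σ))) with hw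
    set n : ℝ → ℝ≥0∞ := fun σ => (‖η1 σ‖₊ : ℝ≥0∞) with hn
    have hwm : Measurable w := by
      have : Continuous fun σ : ℝ => Real.exp (-(s - σ)) :=
        Real.continuous_exp.comp (continuous_const.sub continuous_id).neg
      exact this.measurable.ennreal_ofReal
    have hnm : Measurable n := hη1m.enorm
    have hboundA : (‖∫ σ in Ioo (0:ℝ) s, Real.exp (-(s - σ)) • η1 σ‖₊ : ℝ≥0∞)
        ≤ ∫⁻ σ, w σ * n σ ∂ν := by
      refine le_trans (enorm_integral_le_lintegral_enorm _)
        (le_of_eq (lintegral_congr fun σ => ?_))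
      rw [enorm_smul, Real.enorm_eq_ofReal (Real.exp_nonneg _), enorm_eq_nnnorm]
    have hww : ∀ x : ℝ≥0∞, x ^ (1/2:ℝ) * x ^ (1/2:ℝ) = x := fun x => by
      rw [← ENNReal.rpow_add_of_nonneg _ _ (by norm_num) (by norm_num)]; norm_num
    have hCS : (∫⁻ σ, w σ * n σ ∂ν) ^ 2 ≤ (∫⁻ σ, w σ ∂ν) * (∫⁻ σ, w σ * n σ ^ 2 ∂ν) := by
      have h22 : (2:ℝ).HolderConjugate 2 := Real.HolderConjugate.two_two
      have hH := ENNReal.lintegral_mul_le_Lp_mul_Lq ν h22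
        ((hwm.pow_const (1/2:ℝ)).aemeasurable)
        (((hwm.pow_const (1/2:ℝ)).mul hnm).aemeasurable)
      have e1 : ∀ σ, ((fun σ => w σ ^ (1/2:ℝ)) * fun σ => w σ ^ (1/2:ℝ) * n σ) σ
          = w σ * n σ := fun σ => by
        simp only [Pi.mul_apply]; rw [← mul_assoc, hww]
      have e2 : ∀ σ, (w σ ^ (1/2:ℝ)) ^ (2:ℝ) = w σ := fun σ => by
        rw [← ENNReal.rpow_mul]; norm_num
      have e3 : ∀ σ, (w σ ^ (1/2:ℝ) * n σ) ^ (2:ℝ) = w σ * n σ ^ 2 := fun σ => by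
        rw [ENNReal.mul_rpow_of_nonneg _ _ (by norm_num : (0:ℝ) ≤ 2), ← ENNReal.rpow_mul,
          ← ENNReal.rpow_natCast (n σ) 2]
        norm_num
      calc (∫⁻ σ, w σ * n σ ∂ν) ^ 2
          ≤ ((∫⁻ σ, (w σ ^ (1/2:ℝ)) ^ (2:ℝ) ∂ν) ^ (1/(2:ℝ))
              * (∫⁻ σ, (w σ ^ (1/2:ℝ) * n σ) ^ (2:ℝ) ∂ν) ^ (1/(2:ℝ))) ^ 2 := by
            refine pow_le_pow_left₀ zero_le ?_ 2
            exact le_trans (le_of_eq (lintegral_congr fun σ => (e1 σ).symm)) hH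
        _ = (∫⁻ σ, w σ ∂ν) * (∫⁻ σ, w σ * n σ ^ 2 ∂ν) := by
            simp_rw [e2, e3]
            rw [mul_pow, pow_two, pow_two, hww, hww]
    have hwle : (∫⁻ σ, w σ ∂ν) ≤ 1 := by
      have hc : Continuous fun σ : ℝ => Real.exp (-(s - σ)) :=
        Real.continuous_exp.comp (continuous_const.sub continuous_id).neg
      have hint' : IntegrableOn (fun σ : ℝ => Real.exp (-(s - σ))) (Ioo 0 s) :=
        ((intervalIntegrable_iff_integrableOn_Ioc_of_le (le_of_lt hs)).mp
          (hc.intervalIntegrable 0 s)).mono_set Ioo_subset_Ioc_self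
      rw [hν, ← ofReal_integral_eq_lintegral_ofReal hint'
        (Filter.Eventually.of_forall fun x => Real.exp_nonneg _)]
      rw [ENNReal.ofReal_le_one]
      have hval : (∫ σ in Ioo (0:ℝ) s, Real.exp (-(s - σ))) = 1 - Real.exp (-s) := by
        rw [← integral_Ioc_eq_integral_Ioo, ← intervalIntegral.integral_of_le (le_of_lt hs)]
        have hre : ∀ σ : ℝ, Real.exp (-(s - σ)) = Real.exp (σ - s) := fun σ => by rw [neg_sub]
        simp_rw [hre]
        rw [intervalIntegral.integral_comp_sub_right (fun x => Real.exp x) s, integral_exp]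
        simp
      rw [hval]
      have := Real.exp_pos (-s)
      linarith
    calc ENNReal.ofReal (μ s * ‖∫ σ in Ioo (0:ℝ) s, Real.exp (-(s - σ)) • η1 σ‖ ^ 2)
        = ENNReal.ofReal (μ s)
            * (‖∫ σ in Ioo (0:ℝ) s, Real.exp (-(s - σ)) • η1 σ‖₊ : ℝ≥0∞) ^ 2 := by
          rw [ENNReal.ofReal_mul (hpos s hs), ENNReal.ofReal_pow (norm_nonneg _),
            ofReal_norm_eq_enorm, enorm_eq_nnnorm]
      _ ≤ ENNReal.ofReal (μ s) * (∫⁻ σ, w σ * n σ ∂ν) ^ 2 :=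
          mul_le_mul_right (pow_le_pow_left₀ zero_le hboundA 2) _
      _ ≤ ENNReal.ofReal (μ s) * ((∫⁻ σ, w σ ∂ν) * (∫⁻ σ, w σ * n σ ^ 2 ∂ν)) :=
          mul_le_mul_right hCS _
      _ ≤ ENNReal.ofReal (μ s) * (1 * (∫⁻ σ, w σ * n σ ^ 2 ∂ν)) :=
          mul_le_mul_right (mul_le_mul_left hwle _) _
      _ = ∫⁻ σ, ENNReal.ofReal (μ s) * (w σ * n σ ^ 2) ∂ν := by
          rw [one_mul, lintegral_const_mul (f := fun σ => w σ * n σ ^ 2) _ (hwm.mul (hnm.pow_const 2))]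
      _ ≤ ∫⁻ σ in Ioo (0:ℝ) s,
            ENNReal.ofReal (Real.exp (-(s - σ))) * ENNReal.ofReal (μ σ * ‖η1 σ‖ ^ 2) := by
          rw [← hν]
          refine lintegral_mono_ae ?_
          filter_upwards [ae_restrict_mem measurableSet_Ioo] with σ hσ
          rw [ENNReal.ofReal_mul (hpos σ (Ioo_subset_Ioi_self hσ)),
            ENNReal.ofReal_pow (norm_nonneg _), ofReal_norm_eq_enorm, enorm_eq_nnnorm,
            ← mul_assoc, mul_comm (ENNReal.ofReal (μ s)) (w σ), mul_assoc]
          refine mul_le_mul_right (mul_le_mul_left (ENNReal.ofReal_le_ofReal ?_) _) _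
          exact hmono (Ioo_subset_Ioi_self hσ) hs hσ.2.le
  -- Tonelli: double integral equals the single one
  have swap : (∫⁻ s in Ioi (0:ℝ),
        ∫⁻ σ in Ioo (0:ℝ) s, ENNReal.ofReal (Real.exp (-(s - σ))) * h1 σ)
      = ∫⁻ σ in Ioi (0:ℝ), h1 σ := by
    have hSm : MeasurableSet {q : ℝ × ℝ | 0 < q.2 ∧ q.2 < q.1} :=
      (measurableSet_lt measurable_const measurable_snd).inter
        (measurableSet_lt measurable_snd measurable_fst)
    set G : ℝ × ℝ → ℝ≥0∞ := ({q : ℝ × ℝ | 0 < q.2 ∧ q.2 < q.1}).indicator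
      (fun q => ENNReal.ofReal (Real.exp (-(q.1 - q.2))) * h1 q.2) with hG
    have hGm : Measurable G := by
      refine Measurable.indicator ?_ hSm
      exact ((Real.continuous_exp.comp
        (continuous_fst.sub continuous_snd).neg).measurable.ennreal_ofReal).mul
        (hh1m.comp measurable_snd)
    have e1 : ∀ s : ℝ, (∫⁻ σ, G (s, σ))
        = ∫⁻ σ in Ioo (0:ℝ) s, ENNReal.ofReal (Real.exp (-(s - σ))) * h1 σ := by
      intro s
      rw [← lintegral_indicator measurableSet_Ioo]
      congr 1
    have e2 : ∀ σ : ℝ, (∫⁻ s, G (s, σ))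
        = (Ioi (0:ℝ)).indicator (fun σ =>
            (∫⁻ s in Ioi σ, ENNReal.ofReal (Real.exp (-(s - σ)))) * h1 σ) σ := by
      intro σ
      by_cases hσ : (0:ℝ) < σ
      · have hwm : Measurable fun s : ℝ => ENNReal.ofReal (Real.exp (-(s - σ))) := by
          have : Continuous fun s : ℝ => Real.exp (-(s - σ)) := by continuity
          exact this.measurable.ennreal_ofReal
        rw [Set.indicator_of_mem (mem_Ioi.mpr hσ), ← lintegral_mul_const _ hwm,
          ← lintegral_indicator measurableSet_Ioi]
        refine lintegral_congr fun s => ?_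
        by_cases h : σ < s
        · rw [hG, Set.indicator_of_mem
            (show (s, σ) ∈ {q : ℝ × ℝ | 0 < q.2 ∧ q.2 < q.1} from ⟨hσ, h⟩),
            Set.indicator_of_mem (mem_Ioi.mpr h)]
        · rw [hG, Set.indicator_of_notMem
            (show (s, σ) ∉ {q : ℝ × ℝ | 0 < q.2 ∧ q.2 < q.1} from fun hc => h hc.2),
            Set.indicator_of_notMem (fun hc => h (mem_Ioi.mp hc))]
      · rw [Set.indicator_of_notMem (fun hc => hσ (mem_Ioi.mp hc))]
        have hz : ∀ s : ℝ, G (s, σ) = 0 := fun s => Set.indicator_of_notMem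
          (show (s, σ) ∉ {q : ℝ × ℝ | 0 < q.2 ∧ q.2 < q.1} from fun hc => hσ hc.1) _
        simp [hz]
    have e3 : ∀ σ : ℝ, (∫⁻ s in Ioi σ, ENNReal.ofReal (Real.exp (-(s - σ)))) = 1 := by
      intro σ
      have hi : IntegrableOn (fun x : ℝ => Real.exp (-(x - σ))) (Ioi σ) := by
        have heq : (fun x : ℝ => Real.exp (-(x - σ)))
            = fun x => Real.exp σ * Real.exp (-1 * x) := by
          funext x; rw [← Real.exp_add]; ring_nf
        rw [heq]
        exact (exp_neg_integrableOn_Ioi σ (b := 1) one_pos).const_mul (Real.exp σ)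
      rw [← ofReal_integral_eq_lintegral_ofReal hi
        (Filter.Eventually.of_forall fun x => Real.exp_nonneg _)]
      have hval : (∫ x in Ioi σ, Real.exp (-(x - σ))) = 1 := by
        have hre : ∀ x : ℝ, Real.exp (-(x - σ)) = Real.exp σ * Real.exp (-x) := by
          intro x; rw [← Real.exp_add]; ring_nf
        simp_rw [hre]
        rw [integral_const_mul, integral_exp_neg_Ioi, ← Real.exp_add]
        simp
      rw [hval, ENNReal.ofReal_one]
    calc (∫⁻ s in Ioi (0:ℝ),
          ∫⁻ σ in Ioo (0:ℝ) s, ENNReal.ofReal (Real.exp (-(s - σ))) * h1 σ)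
        = ∫⁻ s, ∫⁻ σ, G (s, σ) := by
          rw [← lintegral_indicator measurableSet_Ioi]
          refine (lintegral_congr fun s => ?_).symm
          by_cases h : s ∈ Ioi (0:ℝ)
          · rw [Set.indicator_of_mem h, e1]
          · rw [Set.indicator_of_notMem h, e1]
            have he : Ioo (0:ℝ) s = ∅ := Ioo_eq_empty (fun hc => h (mem_Ioi.mpr hc))
            simp [he]
      _ = ∫⁻ σ, ∫⁻ s, G (s, σ) := lintegral_lintegral_swap hGm.aemeasurable
      _ = ∫⁻ σ in Ioi (0:ℝ), h1 σ := by
          simp_rw [e2]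
          rw [lintegral_indicator measurableSet_Ioi]
          refine setLIntegral_congr_fun_ae measurableSet_Ioi
            (Filter.Eventually.of_forall fun σ _ => ?_)
          rw [e3, one_mul]
  -- value of the h1 integral
  have hK : (∫⁻ σ in Ioi (0:ℝ), h1 σ)
      = ENNReal.ofReal (∫ s in Ioi (0:ℝ), μ s * ‖η s‖ ^ 2) := by
    have hcongr : (fun σ => ENNReal.ofReal (μ σ * ‖η σ‖ ^ 2)) =ᵐ[volume.restrict (Ioi 0)] h1 := by
      filter_upwards [hμ1e, hη1e] with σ h1' h2'
      simp [hh1def, h1', h2']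
    rw [← lintegral_congr_ae hcongr]
    refine (ofReal_integral_eq_lintegral_ofReal hη ?_).symm
    filter_upwards [ae_restrict_mem measurableSet_Ioi] with s hs
    exact mul_nonneg (hpos s hs) (by positivity)
  have hKlt : (∫⁻ σ in Ioi (0:ℝ), h1 σ) ≠ ⊤ := by rw [hK]; exact ENNReal.ofReal_ne_top
  -- main lintegral bound
  have main : (∫⁻ s in Ioi (0:ℝ), ENNReal.ofReal (μ s * ‖ξ1 s‖ ^ 2))
      ≤ ∫⁻ σ in Ioi (0:ℝ), h1 σ := by
    rw [← swap]
    refine lintegral_mono_ae ?_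
    filter_upwards [ae_restrict_mem measurableSet_Ioi] with s hs using key s hs
  -- the goal function, rewritten
  have hFcongr : (fun s => μ s * ‖∫ σ in (0 : ℝ)..s, Real.exp (-(s - σ)) • η σ‖ ^ 2)
      =ᵐ[volume.restrict (Ioi 0)] (fun s => μ s * ‖ξ1 s‖ ^ 2) := by
    filter_upwards [ae_restrict_mem measurableSet_Ioi] with s hs
    rw [hξeq s hs]
  have hFnn : 0 ≤ᵐ[volume.restrict (Ioi 0)] (fun s => μ s * ‖ξ1 s‖ ^ 2) := by
    filter_upwards [ae_restrict_mem measurableSet_Ioi] with s hs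
    exact mul_nonneg (hpos s hs) (by positivity)
  have hFm : AEStronglyMeasurable (fun s => μ s * ‖ξ1 s‖ ^ 2) (volume.restrict (Ioi 0)) :=
    hint.1.mul ((hξ1meas.norm.measurable.pow_const 2).aestronglyMeasurable)
  have hFlintlt : (∫⁻ s in Ioi (0:ℝ), ENNReal.ofReal (μ s * ‖ξ1 s‖ ^ 2)) < ⊤ :=
    lt_of_le_of_lt main (lt_of_le_of_ne le_top hKlt)
  have hFint : IntegrableOn (fun s => μ s * ‖ξ1 s‖ ^ 2) (Ioi 0) := by
    refine ⟨hFm, ?_⟩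
    rw [hasFiniteIntegral_iff_norm]
    refine lt_of_le_of_lt (le_of_eq (lintegral_congr_ae ?_)) hFlintlt
    filter_upwards [hFnn] with s hsn
    rw [Real.norm_eq_abs, abs_of_nonneg hsn]
  constructor
  · exact (integrable_congr hFcongr.symm).mp hFint
  · calc (∫ s in Ioi (0:ℝ), μ s * ‖∫ σ in (0 : ℝ)..s, Real.exp (-(s - σ)) • η σ‖ ^ 2)
        = ∫ s in Ioi (0:ℝ), μ s * ‖ξ1 s‖ ^ 2 := integral_congr_ae hFcongr
      _ ≤ ∫ s in Ioi (0:ℝ), μ s * ‖η s‖ ^ 2 := by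
          rw [integral_eq_lintegral_of_nonneg_ae hFnn hFm]
          have h2 : (∫ s in Ioi (0:ℝ), μ s * ‖η s‖ ^ 2)
              = (∫⁻ s in Ioi (0:ℝ), h1 s).toReal := by
            rw [hK, ENNReal.toReal_ofReal]
            refine integral_nonneg_of_ae ?_
            filter_upwards [ae_restrict_mem measurableSet_Ioi] with s hs
            exact mul_nonneg (hpos s hs) (by positivity)
          rw [h2]
          exact ENNReal.toReal_mono hKlt main
end

section
/- Let μ : (0,∞) → [0,∞) be non-increasing and integrable satisfying μ(t+s) ≤ C e^{-δt} μ(s) for all t ≥ 0, s > 0 (with C ≥ 1, δ > 0). Let λ ∈ ℂ with −δ/2 < Re λ. For η̂ ∈ M = L²_μ(0,∞; H), define ξ̂(s) = ∫_0^s e^{-λ(s-σ)} η̂(σ) dσ. Then ξ̂ ∈ M and ‖ξ̂‖_M ≤ (2√C)/(δ + 2 Re λ) ‖η̂‖_M. -/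
open MeasureTheory Set Filter Topology ENNReal

private lemma exp_intOn_Ioi (κ a : ℝ) (hκ : 0 < κ) :
    IntegrableOn (fun s : ℝ => Real.exp (-κ * (s - a))) (Ioi a) := by
  have h : (fun s : ℝ => Real.exp (-κ * (s - a)))
      = fun s => Real.exp (κ * a) * Real.exp (-κ * s) := by
    funext s; rw [← Real.exp_add]; ring_nf
  rw [h]
  exact (exp_neg_integrableOn_Ioi a hκ).const_mul _

private lemma exp_setIntegral_Ioi (κ a : ℝ) (hκ : 0 < κ) :
    ∫ s in Ioi a, Real.exp (-κ * (s - a)) = 1 / κ := by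
  have hderiv : ∀ x ∈ Ioi a, HasDerivAt (fun s : ℝ => Real.exp (-κ * (s - a)) / (-κ))
      (Real.exp (-κ * (x - a))) x := by
    intro x _
    have h1 : HasDerivAt (fun s : ℝ => -κ * (s - a)) (-κ) x := by
      simpa using ((hasDerivAt_id x).sub_const a).const_mul (-κ)
    have h2 := (Real.hasDerivAt_exp (-κ * (x - a))).comp x h1
    have h3 := h2.div_const (-κ)
    convert h3 using 1
    · rfl
    · rfl
    · rfl
    · exact (mul_div_cancel_right₀ _ (neg_ne_zero.mpr hκ.ne')).symm
  have htend : Tendsto (fun s : ℝ => Real.exp (-κ * (s - a)) / (-κ)) atTop (𝓝 0) := by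
    have h1 : Tendsto (fun s : ℝ => s - a) atTop atTop :=
      tendsto_atTop_add_const_right atTop (-a) tendsto_id
    have h2 : Tendsto (fun s : ℝ => -κ * (s - a)) atTop atBot :=
      h1.const_mul_atTop_of_neg (by linarith)
    have h3 := (Real.tendsto_exp_atBot.comp h2).div_const (-κ)
    simpa using h3
  have key := integral_Ioi_of_hasDerivAt_of_tendsto
    (f := fun s : ℝ => Real.exp (-κ * (s - a)) / (-κ))
    (Continuous.continuousWithinAt (by fun_prop)) hderiv (exp_intOn_Ioi κ a hκ) htend
  rw [key]
  simp

private lemma exp_intOn_Ioc (κ s : ℝ) :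
    IntegrableOn (fun σ : ℝ => Real.exp (-κ * (s - σ))) (Ioc 0 s) := by
  apply Continuous.integrableOn_Ioc
  fun_prop

private lemma exp_setIntegral_Ioc_le (κ s : ℝ) (hκ : 0 < κ) (hs : 0 ≤ s) :
    ∫ σ in Ioc 0 s, Real.exp (-κ * (s - σ)) ≤ 1 / κ := by
  rw [← intervalIntegral.integral_of_le hs]
  have hderiv : ∀ x ∈ uIcc (0:ℝ) s, HasDerivAt (fun σ : ℝ => Real.exp (-κ * (s - σ)) / κ)
      (Real.exp (-κ * (s - x))) x := by
    intro x _
    have h1 : HasDerivAt (fun σ : ℝ => -κ * (s - σ)) κ x := by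
      simpa using ((hasDerivAt_id x).const_sub s).const_mul (-κ)
    have h2 := (Real.hasDerivAt_exp (-κ * (s - x))).comp x h1
    have h3 := h2.div_const κ
    convert h3 using 1
    · rfl
    · rfl
    · rfl
    · exact (mul_div_cancel_right₀ _ hκ.ne').symm
  have key := intervalIntegral.integral_eq_sub_of_hasDerivAt hderiv
    ((Continuous.intervalIntegrable (by fun_prop) _ _))
  rw [key]
  have h4 : 0 ≤ Real.exp (-κ * (s - 0)) / κ := by positivity
  have h5 : Real.exp (-κ * (s - s)) = 1 := by simp
  rw [h5]
  linarith

/-- Let `μ : (0,∞) → [0,∞)` be non-increasing and integrable with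
`μ(t+s) ≤ C e^{-δt} μ(s)` (`C ≥ 1`, `δ > 0`), and let `λ ∈ ℂ` with `-δ/2 < Re λ`.
For `η̂ ∈ M = L²_μ(0,∞;H)`, the function `ξ̂(s) = ∫_0^s e^{-λ(s-σ)} η̂(σ) dσ` belongs
to `M` and `‖ξ̂‖_M ≤ (2√C)/(δ + 2 Re λ) ‖η̂‖_M`. -/
theorem stmt10 {H : Type*} [NormedAddCommGroup H] [InnerProductSpace ℂ H] [CompleteSpace H]
    (μ : ℝ → ℝ) (hpos : ∀ s ∈ Ioi (0 : ℝ), 0 ≤ μ s)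
    (hmono : AntitoneOn μ (Ioi 0))
    (hint : IntegrableOn μ (Ioi 0))
    (C δ : ℝ) (hC : 1 ≤ C) (hδ : 0 < δ)
    (hdecay : ∀ t ≥ (0 : ℝ), ∀ s > (0 : ℝ), μ (t + s) ≤ C * Real.exp (-δ * t) * μ s)
    (lam : ℂ) (hlam : -(δ / 2) < lam.re)
    (η : ℝ → H)
    (hmeas : AEStronglyMeasurable η (volume.restrict (Ioi 0)))
    (hη : IntegrableOn (fun s => μ s * ‖η s‖ ^ 2) (Ioi 0)) :
    IntegrableOn
        (fun s => μ s * ‖∫ σ in (0 : ℝ)..s, Complex.exp (-lam * (s - σ)) • η σ‖ ^ 2)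
        (Ioi 0) ∧
      Real.sqrt (∫ s in Ioi (0 : ℝ),
          μ s * ‖∫ σ in (0 : ℝ)..s, Complex.exp (-lam * (s - σ)) • η σ‖ ^ 2) ≤
        (2 * Real.sqrt C / (δ + 2 * lam.re)) *
          Real.sqrt (∫ s in Ioi (0 : ℝ), μ s * ‖η s‖ ^ 2) := by
  have hCpos : (0:ℝ) < C := lt_of_lt_of_le one_pos hC
  have hκpos : 0 < δ / 2 + lam.re := by linarith
  set κ : ℝ := δ / 2 + lam.re with hκdef
  set Φ : ℝ → ℝ :=
    fun s => μ s * ‖∫ σ in (0:ℝ)..s, Complex.exp (-lam * (s - σ)) • η σ‖ ^ 2 with hΦdef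
  have hΦs : ∀ s : ℝ, Φ s
      = μ s * ‖∫ σ in (0:ℝ)..s, Complex.exp (-lam * (s - σ)) • η σ‖ ^ 2 := fun s => rfl
  have hwm := hη.aestronglyMeasurable
  set w : ℝ → ℝ := hwm.mk _ with hwdef
  have hw_sm : StronglyMeasurable w := hwm.stronglyMeasurable_mk
  have hw_ae : (fun s => μ s * ‖η s‖ ^ 2) =ᵐ[volume.restrict (Ioi 0)] w := hwm.ae_eq_mk
  have hw_meas : Measurable w := hw_sm.measurable
  set f : ℝ → ℝ≥0∞ := fun σ => ENNReal.ofReal (w σ) with hfdef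
  set J : ℝ → ℝ≥0∞ := fun s =>
    ∫⁻ σ in Ioc 0 s, ENNReal.ofReal (Real.exp (-κ * (s - σ)) * (μ σ * ‖η σ‖ ^ 2)) with hJdef
  have hnorm : ∀ s σ : ℝ, ‖Complex.exp (-lam * (s - σ)) • η σ‖
      = Real.exp (-lam.re * (s - σ)) * ‖η σ‖ := by
    intro s σ
    rw [norm_smul, Complex.norm_exp]
    congr 2
    simp [Complex.mul_re]
  have hμm : AEStronglyMeasurable μ (volume.restrict (Ioi 0)) := hint.aestronglyMeasurable
  -- pointwise bound
  have hP : ∀ s ∈ Ioi (0:ℝ), ENNReal.ofReal (Φ s) ≤ ENNReal.ofReal (C / κ) * J s := by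
    intro s hs
    have hs0 : (0:ℝ) < s := hs
    have hμs : 0 ≤ μ s := hpos s hs
    -- key real inequality
    have h2 : ∀ σ ∈ Ioc (0:ℝ) s,
        Real.sqrt (μ s) * (Real.exp (-lam.re * (s - σ)) * ‖η σ‖)
          ≤ Real.sqrt C * (Real.exp (-(κ/2) * (s - σ))
              * (Real.exp (-(κ/2) * (s - σ)) * (Real.sqrt (μ σ) * ‖η σ‖))) := by
      intro σ hσ
      have hu : 0 ≤ s - σ := sub_nonneg.mpr hσ.2
      have hd := hdecay (s - σ) hu σ hσ.1
      rw [sub_add_cancel] at hd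
      have hsq : Real.sqrt (μ s)
          ≤ Real.sqrt C * (Real.exp (-(δ/2) * (s - σ)) * Real.sqrt (μ σ)) := by
        calc Real.sqrt (μ s) ≤ Real.sqrt (C * Real.exp (-δ * (s - σ)) * μ σ) :=
              Real.sqrt_le_sqrt hd
          _ = Real.sqrt C * (Real.sqrt (Real.exp (-δ * (s - σ))) * Real.sqrt (μ σ)) := by
              rw [Real.sqrt_mul (by positivity), Real.sqrt_mul hCpos.le, mul_assoc]
          _ = Real.sqrt C * (Real.exp (-(δ/2) * (s - σ)) * Real.sqrt (μ σ)) := by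
              rw [← Real.exp_half]
              ring_nf
      have hexp : Real.exp (-(δ/2) * (s - σ)) * Real.exp (-lam.re * (s - σ))
          = Real.exp (-(κ/2) * (s - σ)) * Real.exp (-(κ/2) * (s - σ)) := by
        rw [← Real.exp_add, ← Real.exp_add, hκdef]
        ring_nf
      calc Real.sqrt (μ s) * (Real.exp (-lam.re * (s - σ)) * ‖η σ‖)
          ≤ (Real.sqrt C * (Real.exp (-(δ/2) * (s - σ)) * Real.sqrt (μ σ)))
              * (Real.exp (-lam.re * (s - σ)) * ‖η σ‖) :=
            mul_le_mul_of_nonneg_right hsq (by positivity)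
        _ = Real.sqrt C * ((Real.exp (-(δ/2) * (s - σ)) * Real.exp (-lam.re * (s - σ)))
              * (Real.sqrt (μ σ) * ‖η σ‖)) := by ring
        _ = Real.sqrt C * (Real.exp (-(κ/2) * (s - σ))
              * (Real.exp (-(κ/2) * (s - σ)) * (Real.sqrt (μ σ) * ‖η σ‖))) := by
            rw [hexp]; ring
    set g1 : ℝ → ℝ≥0∞ := fun σ => ENNReal.ofReal (Real.exp (-(κ/2) * (s - σ))) with hg1def
    set g2 : ℝ → ℝ≥0∞ := fun σ =>
      ENNReal.ofReal (Real.exp (-(κ/2) * (s - σ)) * (Real.sqrt (μ σ) * ‖η σ‖)) with hg2def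
    have hg1m : AEMeasurable g1 (volume.restrict (Ioc 0 s)) :=
      (Measurable.ennreal_ofReal (Continuous.measurable (by fun_prop))).aemeasurable
    have hg2m : AEMeasurable g2 (volume.restrict (Ioc 0 s)) := by
      have hμσm : AEStronglyMeasurable μ (volume.restrict (Ioc 0 s)) :=
        hμm.mono_measure (Measure.restrict_mono Ioc_subset_Ioi_self le_rfl)
      have hησm : AEStronglyMeasurable η (volume.restrict (Ioc 0 s)) :=
        hmeas.mono_measure (Measure.restrict_mono Ioc_subset_Ioi_self le_rfl)
      have h : AEStronglyMeasurable
          (fun σ => Real.exp (-(κ/2) * (s - σ)) * (Real.sqrt (μ σ) * ‖η σ‖))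
          (volume.restrict (Ioc 0 s)) :=
        (Continuous.aestronglyMeasurable (by fun_prop)).mul
          ((Real.continuous_sqrt.comp_aestronglyMeasurable hμσm).mul hησm.norm)
      exact ENNReal.measurable_ofReal.comp_aemeasurable h.aemeasurable
    have e0 : ENNReal.ofReal ‖∫ σ in (0:ℝ)..s, Complex.exp (-lam * (s - σ)) • η σ‖
        ≤ ∫⁻ σ in Ioc 0 s, ENNReal.ofReal (Real.exp (-lam.re * (s - σ)) * ‖η σ‖) := by
      rw [intervalIntegral.integral_of_le hs0.le, ofReal_norm]
      refine le_trans (enorm_integral_le_lintegral_enorm _) (le_of_eq ?_)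
      refine lintegral_congr fun σ => ?_
      rw [← ofReal_norm, hnorm s σ]
    have hg1sq : ∀ σ : ℝ, g1 σ ^ (2:ℝ) = ENNReal.ofReal (Real.exp (-κ * (s - σ))) := by
      intro σ
      rw [hg1def]
      dsimp only
      rw [ENNReal.ofReal_rpow_of_nonneg (Real.exp_nonneg _) (by norm_num),
        ← Real.exp_mul]
      congr 1
      ring
    have hg1int : ∫⁻ σ in Ioc 0 s, g1 σ ^ (2:ℝ) ≤ ENNReal.ofReal (1/κ) := by
      calc ∫⁻ σ in Ioc 0 s, g1 σ ^ (2:ℝ)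
          = ∫⁻ σ in Ioc 0 s, ENNReal.ofReal (Real.exp (-κ * (s - σ))) :=
            lintegral_congr fun σ => hg1sq σ
        _ = ENNReal.ofReal (∫ σ in Ioc 0 s, Real.exp (-κ * (s - σ))) :=
            (ofReal_integral_eq_lintegral_ofReal (exp_intOn_Ioc κ s)
              (ae_of_all _ fun σ => Real.exp_nonneg _)).symm
        _ ≤ ENNReal.ofReal (1/κ) :=
            ENNReal.ofReal_le_ofReal (exp_setIntegral_Ioc_le κ s hκpos hs0.le)
    have hg2sq : ∫⁻ σ in Ioc 0 s, g2 σ ^ (2:ℝ) = J s := by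
      refine lintegral_congr_ae ((ae_restrict_iff' measurableSet_Ioc).2
        (ae_of_all _ fun σ hσ => ?_))
      have hμσ : 0 ≤ μ σ := hpos σ hσ.1
      rw [hg2def]
      dsimp only
      rw [ENNReal.ofReal_rpow_of_nonneg (by positivity) (by norm_num)]
      congr 1
      rw [show (2:ℝ) = ((2:ℕ):ℝ) by norm_num, Real.rpow_natCast, mul_pow, mul_pow,
        Real.sq_sqrt hμσ, ← Real.exp_nat_mul]
      push_cast
      ring_nf
    have hCS := ENNReal.lintegral_mul_le_Lp_mul_Lq (volume.restrict (Ioc 0 s))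
      (Real.HolderConjugate.two_two : Real.HolderConjugate 2 2) hg1m hg2m
    calc ENNReal.ofReal (Φ s)
        = ENNReal.ofReal (μ s)
            * ENNReal.ofReal ‖∫ σ in (0:ℝ)..s, Complex.exp (-lam * (s - σ)) • η σ‖ ^ 2 := by
          rw [hΦs s, ENNReal.ofReal_mul hμs, ENNReal.ofReal_pow (norm_nonneg _)]
      _ ≤ ENNReal.ofReal (μ s)
            * (∫⁻ σ in Ioc 0 s, ENNReal.ofReal (Real.exp (-lam.re * (s - σ)) * ‖η σ‖)) ^ 2 := by
          gcongr
      _ = (∫⁻ σ in Ioc 0 s, ENNReal.ofReal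
            (Real.sqrt (μ s) * (Real.exp (-lam.re * (s - σ)) * ‖η σ‖))) ^ 2 := by
          rw [show ENNReal.ofReal (μ s) = ENNReal.ofReal (Real.sqrt (μ s)) ^ 2 by
            rw [← ENNReal.ofReal_pow (Real.sqrt_nonneg _), Real.sq_sqrt hμs]]
          rw [← mul_pow]
          congr 1
          rw [← lintegral_const_mul' _ _ ENNReal.ofReal_ne_top]
          exact lintegral_congr fun σ => (ENNReal.ofReal_mul (Real.sqrt_nonneg _)).symm
      _ ≤ (∫⁻ σ in Ioc 0 s, ENNReal.ofReal (Real.sqrt C * (Real.exp (-(κ/2) * (s - σ))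
            * (Real.exp (-(κ/2) * (s - σ)) * (Real.sqrt (μ σ) * ‖η σ‖))))) ^ 2 := by
          refine pow_le_pow_left' ?_ 2
          refine lintegral_mono_ae ((ae_restrict_iff' measurableSet_Ioc).2
            (ae_of_all _ fun σ hσ => ENNReal.ofReal_le_ofReal (h2 σ hσ)))
      _ = ENNReal.ofReal C * (∫⁻ σ in Ioc 0 s, g1 σ * g2 σ) ^ 2 := by
          have hptw : ∀ σ : ℝ, ENNReal.ofReal (Real.sqrt C * (Real.exp (-(κ/2) * (s - σ))
              * (Real.exp (-(κ/2) * (s - σ)) * (Real.sqrt (μ σ) * ‖η σ‖))))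
              = ENNReal.ofReal (Real.sqrt C) * (g1 σ * g2 σ) := by
            intro σ
            rw [hg1def, hg2def]
            dsimp only
            rw [ENNReal.ofReal_mul (Real.sqrt_nonneg _), ENNReal.ofReal_mul (Real.exp_nonneg _)]
          rw [lintegral_congr hptw, lintegral_const_mul' _ _ ENNReal.ofReal_ne_top, mul_pow,
            ← ENNReal.ofReal_pow (Real.sqrt_nonneg _), Real.sq_sqrt hCpos.le]
      _ ≤ ENNReal.ofReal C * ((∫⁻ σ in Ioc 0 s, g1 σ ^ (2:ℝ)) ^ (1/(2:ℝ))
            * (∫⁻ σ in Ioc 0 s, g2 σ ^ (2:ℝ)) ^ (1/(2:ℝ))) ^ 2 := by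
          gcongr
          exact le_trans (le_of_eq (lintegral_congr fun σ => rfl)) hCS
      _ = ENNReal.ofReal C * ((∫⁻ σ in Ioc 0 s, g1 σ ^ (2:ℝ))
            * (∫⁻ σ in Ioc 0 s, g2 σ ^ (2:ℝ))) := by
          congr 1
          rw [mul_pow, ← ENNReal.rpow_natCast (_ ^ (1/(2:ℝ))) 2,
            ← ENNReal.rpow_natCast (_ ^ (1/(2:ℝ))) 2, ← ENNReal.rpow_mul, ← ENNReal.rpow_mul]
          norm_num
      _ ≤ ENNReal.ofReal C * (ENNReal.ofReal (1/κ) * J s) := by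
          rw [hg2sq]
          exact mul_le_mul_right (mul_le_mul_left hg1int _) _
      _ = ENNReal.ofReal (C / κ) * J s := by
          rw [← mul_assoc, ← ENNReal.ofReal_mul hCpos.le, mul_one_div]
  have hT : ∫⁻ s in Ioi 0, J s ≤ ENNReal.ofReal (1 / κ) * ∫⁻ σ in Ioi 0, f σ := by
    set F : ℝ × ℝ → ℝ≥0∞ := fun q =>
      {q : ℝ × ℝ | q.2 ≤ q.1}.indicator
        (fun q => ENNReal.ofReal (Real.exp (-κ * (q.1 - q.2)) * w q.2)) q with hFdef
    have hFmeas : Measurable F := by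
      refine Measurable.indicator ?_ (measurableSet_le measurable_snd measurable_fst)
      refine Measurable.ennreal_ofReal ?_
      exact (Continuous.measurable (by fun_prop)).mul (hw_meas.comp measurable_snd)
    have hJw : ∀ s ∈ Ioi (0:ℝ), J s = ∫⁻ σ in Ioi 0, F (s, σ) := by
      intro s hs
      have h1 : J s = ∫⁻ σ in Ioc 0 s, ENNReal.ofReal (Real.exp (-κ * (s - σ)) * w σ) := by
        refine lintegral_congr_ae ?_
        have h2 : ∀ᵐ σ ∂(volume.restrict (Ioc 0 s)), μ σ * ‖η σ‖ ^ 2 = w σ :=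
          ae_restrict_of_ae_restrict_of_subset Ioc_subset_Ioi_self hw_ae
        exact h2.mono fun σ h => by dsimp only; rw [h]
      rw [h1]
      have h3 : volume.restrict (Ioc (0:ℝ) s) = (volume.restrict (Ioi 0)).restrict (Iic s) := by
        rw [Measure.restrict_restrict measurableSet_Iic, inter_comm, Ioi_inter_Iic]
      rw [h3, ← lintegral_indicator measurableSet_Iic]
      refine lintegral_congr fun σ => ?_
      rw [hFdef]
      dsimp only
      by_cases h : σ ≤ s
      · rw [Set.indicator_of_mem (by exact h : σ ∈ Iic s),
          Set.indicator_of_mem (by exact h : (s, σ) ∈ {q : ℝ × ℝ | q.2 ≤ q.1})]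
      · rw [Set.indicator_of_notMem (by exact h : σ ∉ Iic s),
          Set.indicator_of_notMem (by exact h : (s, σ) ∉ {q : ℝ × ℝ | q.2 ≤ q.1})]
    calc ∫⁻ s in Ioi 0, J s = ∫⁻ s in Ioi 0, ∫⁻ σ in Ioi 0, F (s, σ) := by
          exact lintegral_congr_ae ((ae_restrict_iff' measurableSet_Ioi).2 (ae_of_all _ hJw))
      _ = ∫⁻ σ in Ioi 0, ∫⁻ s in Ioi 0, F (s, σ) :=
          lintegral_lintegral_swap hFmeas.aemeasurable
      _ ≤ ∫⁻ σ in Ioi 0, ENNReal.ofReal (1 / κ) * f σ := by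
          refine lintegral_mono fun σ => ?_
          have hF2 : ∀ s : ℝ, F (s, σ)
              = (Ici σ).indicator (fun s => ENNReal.ofReal (Real.exp (-κ * (s - σ)))) s
                  * ENNReal.ofReal (w σ) := by
            intro t
            rw [hFdef]
            dsimp only
            by_cases h : σ ≤ t
            · rw [Set.indicator_of_mem (by exact h : (t, σ) ∈ {q : ℝ × ℝ | q.2 ≤ q.1}),
                Set.indicator_of_mem (by exact h : t ∈ Ici σ),
                ENNReal.ofReal_mul (Real.exp_nonneg _)]
            · rw [Set.indicator_of_notMem (by exact h : (t, σ) ∉ {q : ℝ × ℝ | q.2 ≤ q.1}),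
                Set.indicator_of_notMem (by exact h : t ∉ Ici σ), zero_mul]
          have hind : ∫⁻ s in Ioi 0,
              (Ici σ).indicator (fun s => ENNReal.ofReal (Real.exp (-κ * (s - σ)))) s
                ≤ ENNReal.ofReal (1 / κ) := by
            rw [lintegral_indicator measurableSet_Ici, Measure.restrict_restrict measurableSet_Ici]
            calc ∫⁻ s in Ici σ ∩ Ioi 0, ENNReal.ofReal (Real.exp (-κ * (s - σ)))
                ≤ ∫⁻ s in Ici σ, ENNReal.ofReal (Real.exp (-κ * (s - σ))) :=
                  lintegral_mono_set inter_subset_left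
              _ = ∫⁻ s in Ioi σ, ENNReal.ofReal (Real.exp (-κ * (s - σ))) := by
                  rw [show volume.restrict (Ici σ) = volume.restrict (Ioi σ) from
                    (Measure.restrict_congr_set Ioi_ae_eq_Ici).symm]
              _ = ENNReal.ofReal (∫ s in Ioi σ, Real.exp (-κ * (s - σ))) :=
                  (ofReal_integral_eq_lintegral_ofReal (exp_intOn_Ioi κ σ hκpos)
                    (ae_of_all _ fun t => Real.exp_nonneg _)).symm
              _ = ENNReal.ofReal (1 / κ) := by rw [exp_setIntegral_Ioi κ σ hκpos]
          calc ∫⁻ s in Ioi 0, F (s, σ)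
              = (∫⁻ s in Ioi 0,
                  (Ici σ).indicator (fun s => ENNReal.ofReal (Real.exp (-κ * (s - σ)))) s)
                  * ENNReal.ofReal (w σ) := by
                rw [← lintegral_mul_const' _ _ ENNReal.ofReal_ne_top]
                exact lintegral_congr hF2
            _ ≤ ENNReal.ofReal (1 / κ) * ENNReal.ofReal (w σ) :=
                mul_le_mul_left hind _
            _ = ENNReal.ofReal (1 / κ) * f σ := rfl
      _ = ENNReal.ofReal (1 / κ) * ∫⁻ σ in Ioi 0, f σ :=
          lintegral_const_mul' _ _ ENNReal.ofReal_ne_top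
  -- total mass of f
  have hAf : ∫⁻ σ in Ioi 0, f σ = ENNReal.ofReal (∫ s in Ioi (0:ℝ), μ s * ‖η s‖ ^ 2) := by
    have h1 : ∫⁻ σ in Ioi 0, f σ = ∫⁻ σ in Ioi 0, ENNReal.ofReal (μ σ * ‖η σ‖ ^ 2) := by
      refine lintegral_congr_ae (hw_ae.mono fun σ h => ?_)
      rw [hfdef]
      exact congrArg ENNReal.ofReal h.symm
    rw [h1, ← ofReal_integral_eq_lintegral_ofReal hη (by
      filter_upwards [ae_restrict_mem measurableSet_Ioi] with s hs
      exact mul_nonneg (hpos s hs) (sq_nonneg _))]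
  -- measurability of Φ
  have hΦm : AEStronglyMeasurable Φ (volume.restrict (Ioi 0)) := by
    set G : ℝ × ℝ → H := fun q =>
      {q : ℝ × ℝ | q.2 ∈ Ioc 0 q.1}.indicator
        (fun q => Complex.exp (-lam * (q.1 - q.2)) • η q.2) q with hGdef
    have hSmeas : MeasurableSet {q : ℝ × ℝ | q.2 ∈ Ioc 0 q.1} := by
      have : {q : ℝ × ℝ | q.2 ∈ Ioc 0 q.1} = {q : ℝ × ℝ | 0 < q.2} ∩ {q : ℝ × ℝ | q.2 ≤ q.1} := by
        ext q; simp [Set.mem_Ioc]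
      rw [this]
      exact (measurableSet_lt measurable_const measurable_snd).inter
        (measurableSet_le measurable_snd measurable_fst)
    have hGm : AEStronglyMeasurable G
        ((volume.restrict (Ioi 0)).prod (volume.restrict (Ioi 0))) := by
      refine AEStronglyMeasurable.indicator ?_ hSmeas
      refine AEStronglyMeasurable.smul (Continuous.aestronglyMeasurable (by fun_prop)) ?_
      exact hmeas.comp_quasiMeasurePreserving Measure.quasiMeasurePreserving_snd
    have hI := hGm.integral_prod_right'
    have hB : AEStronglyMeasurable
        (fun s => μ s * (‖∫ σ, G (s, σ) ∂(volume.restrict (Ioi 0))‖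
          * ‖∫ σ, G (s, σ) ∂(volume.restrict (Ioi 0))‖)) (volume.restrict (Ioi 0)) :=
      hμm.mul (hI.norm.mul hI.norm)
    refine hB.congr ?_
    filter_upwards [ae_restrict_mem measurableSet_Ioi] with s hs
    have hξeq : ∫ σ, G (s, σ) ∂(volume.restrict (Ioi 0))
        = ∫ σ in (0:ℝ)..s, Complex.exp (-lam * (s - σ)) • η σ := by
      rw [intervalIntegral.integral_of_le (le_of_lt hs)]
      have h1 : ∀ σ : ℝ, G (s, σ)
          = (Ioc 0 s).indicator (fun σ => Complex.exp (-lam * (s - σ)) • η σ) σ := by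
        intro σ
        rw [hGdef]
        dsimp only
        by_cases h : σ ∈ Ioc 0 s
        · rw [Set.indicator_of_mem (by exact h), Set.indicator_of_mem h]
        · rw [Set.indicator_of_notMem (by exact h), Set.indicator_of_notMem h]
      rw [show (fun σ => G (s, σ))
          = fun σ => (Ioc 0 s).indicator (fun σ => Complex.exp (-lam * (s - σ)) • η σ) σ from
        funext h1]
      rw [integral_indicator measurableSet_Ioc, Measure.restrict_restrict measurableSet_Ioc,
        inter_eq_left.mpr Ioc_subset_Ioi_self]
    rw [hΦs s, ← hξeq, pow_two]
  set A : ℝ := ∫ s in Ioi (0:ℝ), μ s * ‖η s‖ ^ 2 with hAdef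
  have hA0 : 0 ≤ A := by
    rw [hAdef]
    apply setIntegral_nonneg measurableSet_Ioi
    intro x hx
    exact mul_nonneg (hpos x hx) (sq_nonneg _)
  have hΦnn : 0 ≤ᵐ[volume.restrict (Ioi 0)] Φ := by
    filter_upwards [ae_restrict_mem measurableSet_Ioi] with s hs
    rw [hΦs s]
    exact mul_nonneg (hpos s hs) (sq_nonneg _)
  have hL : ∫⁻ s in Ioi 0, ENNReal.ofReal (Φ s)
      ≤ ENNReal.ofReal (C / κ * (1 / κ) * A) := by
    calc ∫⁻ s in Ioi 0, ENNReal.ofReal (Φ s)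
        ≤ ∫⁻ s in Ioi 0, ENNReal.ofReal (C / κ) * J s := by
          refine lintegral_mono_ae ((ae_restrict_iff' measurableSet_Ioi).2 (ae_of_all _ ?_))
          exact hP
      _ = ENNReal.ofReal (C / κ) * ∫⁻ s in Ioi 0, J s :=
          lintegral_const_mul' _ _ ENNReal.ofReal_ne_top
      _ ≤ ENNReal.ofReal (C / κ) * (ENNReal.ofReal (1 / κ) * ∫⁻ σ in Ioi 0, f σ) := by
          gcongr
      _ = ENNReal.ofReal (C / κ * (1 / κ) * A) := by
          rw [hAf,
            ← ENNReal.ofReal_mul (le_of_lt (one_div_pos.mpr hκpos)),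
            ← ENNReal.ofReal_mul (div_nonneg hCpos.le hκpos.le)]
          congr 1
          ring
  have hΦint : IntegrableOn Φ (Ioi 0) := by
    refine ⟨hΦm, ?_⟩
    rw [hasFiniteIntegral_iff_ofReal hΦnn]
    exact lt_of_le_of_lt hL ENNReal.ofReal_lt_top
  refine ⟨hΦint, ?_⟩
  have hIeq : ∫ s in Ioi (0:ℝ), Φ s ≤ C / κ * (1 / κ) * A := by
    rw [integral_eq_lintegral_of_nonneg_ae hΦnn hΦm]
    calc (∫⁻ s in Ioi 0, ENNReal.ofReal (Φ s)).toReal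
        ≤ (ENNReal.ofReal (C / κ * (1 / κ) * A)).toReal := by
          exact ENNReal.toReal_mono ENNReal.ofReal_ne_top hL
      _ = C / κ * (1 / κ) * A := ENNReal.toReal_ofReal
          (mul_nonneg (mul_nonneg (div_nonneg hCpos.le hκpos.le)
            (le_of_lt (one_div_pos.mpr hκpos))) hA0)
  calc Real.sqrt (∫ s in Ioi (0:ℝ), Φ s)
      ≤ Real.sqrt (C / κ * (1 / κ) * A) := Real.sqrt_le_sqrt hIeq
    _ = Real.sqrt C / κ * Real.sqrt A := by
        have key : ∀ x : ℝ, x ≠ 0 → C / x * (1 / x) * A = (Real.sqrt C / x) ^ 2 * A := by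
          intro x hx
          rw [div_pow, Real.sq_sqrt hCpos.le]
          field_simp
        rw [key κ hκpos.ne']
        rw [Real.sqrt_mul (sq_nonneg _),
          Real.sqrt_sq (div_nonneg (Real.sqrt_nonneg C) hκpos.le)]
    _ = 2 * Real.sqrt C / (δ + 2 * lam.re) * Real.sqrt A := by
        rw [show δ + 2 * lam.re = 2 * κ by rw [hκdef]; ring]
        rw [mul_div_mul_left _ _ (two_ne_zero)]
end

section
/- Define P₂(λ) = tanh(√(λ/ℓ(λ))) / √(λ ℓ(λ)) for Re λ > 0, where ℓ(λ) = 1 + λ^{-1} ∫_0^∞ μ(s)(1 − e^{-λs}) ds and μ is non-increasing and integrable. Then P₂(λ) → 0 as Re λ → ∞, uniformly in Im λ; explicitly, |P₂(λ)| ≤ √(2/Re λ) (1 + 2/(e^{√(Re λ)} − 1)) for Re λ sufficiently large. -/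
open MeasureTheory Set

/-- Norm of the principal square root. -/
lemma aux_sqrt_norm (u : ℂ) : ‖u ^ ((1:ℂ)/2)‖ = Real.sqrt ‖u‖ := by
  have : ((1:ℂ)/2) = ((1/2 : ℝ) : ℂ) := by norm_num
  rw [this, Complex.norm_cpow_real, Real.sqrt_eq_rpow]

lemma aux_sqrt_sq (u : ℂ) (hu : u ≠ 0) : (u ^ ((1:ℂ)/2)) ^ 2 = u := by
  rw [pow_two, ← Complex.cpow_add _ _ hu]
  norm_num

lemma aux_sqrt_re_nonneg (u : ℂ) (hu : u ≠ 0) : 0 ≤ (u ^ ((1:ℂ)/2)).re := by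
  rw [Complex.cpow_def_of_ne_zero hu, Complex.exp_re]
  apply mul_nonneg (Real.exp_pos _).le
  apply Real.cos_nonneg_of_mem_Icc
  have h1 := Complex.neg_pi_lt_arg u
  have h2 := Complex.arg_le_pi u
  have him : (Complex.log u * (1/2)).im = Complex.arg u / 2 := by
    simp [Complex.mul_im, Complex.log_im]
    ring
  rw [him]
  constructor <;> [linarith; linarith]

lemma aux_sqrt_re_ge (u : ℂ) (hu : u ≠ 0) (h : 0 ≤ u.re) :
    Real.sqrt u.re ≤ (u ^ ((1:ℂ)/2)).re := by
  set v := u ^ ((1:ℂ)/2) with hv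
  have hsq : v ^ 2 = u := aux_sqrt_sq u hu
  have hre : u.re = v.re ^ 2 - v.im ^ 2 := by
    rw [← hsq]; simp [pow_two, Complex.mul_re]
  have h1 : u.re ≤ v.re ^ 2 := by nlinarith [sq_nonneg v.im]
  calc Real.sqrt u.re ≤ Real.sqrt (v.re ^ 2) := Real.sqrt_le_sqrt h1
    _ = |v.re| := by rw [Real.sqrt_sq_eq_abs]
    _ = v.re := abs_of_nonneg (aux_sqrt_re_nonneg u hu)

lemma aux_tanh_norm_le (w : ℂ) (hw : 0 < w.re) :
    ‖Complex.tanh w‖ ≤ 1 + 2 / (Real.exp (2 * w.re) - 1) := by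
  set E := Complex.exp (2 * w) with hE
  have hnE : ‖E‖ = Real.exp (2 * w.re) := by
    rw [hE, Complex.norm_exp]
    norm_num
  have hE1 : 1 < ‖E‖ := by
    rw [hnE]
    calc (1:ℝ) = Real.exp 0 := (Real.exp_zero).symm
      _ < Real.exp (2 * w.re) := Real.exp_lt_exp.mpr (by linarith)
  have h2 : Complex.exp (-w) * E = Complex.exp w := by
    rw [hE, ← Complex.exp_add]; ring_nf
  have hf1 : Complex.exp w - Complex.exp (-w) = Complex.exp (-w) * (E - 1) := by
    linear_combination (-1 : ℂ) * h2
  have hf2 : Complex.exp w + Complex.exp (-w) = Complex.exp (-w) * (E + 1) := by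
    linear_combination (-1 : ℂ) * h2
  have hEne : E + 1 ≠ 0 := by
    intro h
    have : E = -1 := eq_neg_of_add_eq_zero_left h
    rw [this] at hE1; simp at hE1
  have hcosh : Complex.cosh w = Complex.exp (-w) * (E + 1) / 2 := by
    rw [Complex.cosh, hf2]
  have hcne : Complex.cosh w ≠ 0 := by
    rw [hcosh]
    simp [Complex.exp_ne_zero, hEne]
  have htanh : Complex.tanh w = (E - 1) / (E + 1) := by
    rw [Complex.tanh_eq_sinh_div_cosh, Complex.sinh, hcosh, hf1]
    field_simp [Complex.exp_ne_zero]
  rw [htanh, norm_div]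
  have hb1 : ‖E - 1‖ ≤ ‖E‖ + 1 := by
    calc ‖E - 1‖ ≤ ‖E‖ + ‖(1:ℂ)‖ := norm_sub_le _ _
      _ = ‖E‖ + 1 := by norm_num
  have hb2 : ‖E‖ - 1 ≤ ‖E + 1‖ := by
    calc ‖E‖ - 1 = ‖E‖ - ‖(-1 : ℂ)‖ := by norm_num
      _ ≤ ‖E - (-1)‖ := norm_sub_norm_le _ _
      _ = ‖E + 1‖ := by ring_nf
  have hpos : 0 < ‖E‖ - 1 := by linarith
  calc ‖E - 1‖ / ‖E + 1‖ ≤ (‖E‖ + 1) / (‖E‖ - 1) :=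
        div_le_div₀ (by positivity) hb1 hpos hb2
    _ = 1 + 2 / (‖E‖ - 1) := by
        have hne' : ‖E‖ - 1 ≠ 0 := hpos.ne'
        rw [show ‖E‖ + 1 = (‖E‖ - 1) + 2 by ring, add_div, div_self hne']
    _ = 1 + 2 / (Real.exp (2 * w.re) - 1) := by rw [hnE]

/-- `ℓ(λ) = 1 + λ⁻¹ ∫_0^∞ μ(s)(1 − e^{−λs}) ds`. -/
noncomputable def ell (μ : ℝ → ℝ) (z : ℂ) : ℂ :=
  1 + z⁻¹ * ∫ s in Ioi (0 : ℝ), (μ s : ℂ) * (1 - Complex.exp (-z * s))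

/-- `P₂(λ) = tanh(√(λ/ℓ(λ))) / √(λ ℓ(λ))`, with principal square roots. -/
noncomputable def P2 (μ : ℝ → ℝ) (z : ℂ) : ℂ :=
  Complex.tanh ((z / ell μ z) ^ ((1 : ℂ) / 2)) / ((z * ell μ z) ^ ((1 : ℂ) / 2))

lemma aux_ell_sub_one_norm (μ : ℝ → ℝ) (hpos : ∀ s ∈ Ioi (0 : ℝ), 0 ≤ μ s)
    (hint : IntegrableOn μ (Ioi 0)) (z : ℂ) (hz : 0 < z.re) :
    ‖ell μ z - 1‖ ≤ ‖z‖⁻¹ * (2 * ∫ s in Ioi (0:ℝ), μ s) := by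
  have hdiff : ell μ z - 1 = z⁻¹ * ∫ s in Ioi (0 : ℝ), (μ s : ℂ) * (1 - Complex.exp (-z * s)) := by
    rw [ell]; ring
  rw [hdiff, norm_mul, norm_inv]
  gcongr _ * ?_
  calc ‖∫ s in Ioi (0:ℝ), (μ s : ℂ) * (1 - Complex.exp (-z * s))‖
      ≤ ∫ s in Ioi (0:ℝ), ‖(μ s : ℂ) * (1 - Complex.exp (-z * s))‖ :=
        norm_integral_le_integral_norm _
    _ ≤ ∫ s in Ioi (0:ℝ), 2 * μ s := by
        apply integral_mono_of_nonneg
        · exact Filter.Eventually.of_forall fun s => norm_nonneg _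
        · exact hint.const_mul 2
        · rw [Filter.EventuallyLE, ae_restrict_iff' measurableSet_Ioi]
          apply Filter.Eventually.of_forall
          intro s hs
          have hs0 : 0 < s := hs
          have h1 : ‖(μ s : ℂ)‖ = μ s := by
            rw [Complex.norm_real, Real.norm_eq_abs, abs_of_nonneg (hpos s hs)]
          have h2 : ‖(1 : ℂ) - Complex.exp (-z * s)‖ ≤ 2 := by
            calc ‖(1 : ℂ) - Complex.exp (-z * s)‖ ≤ ‖(1:ℂ)‖ + ‖Complex.exp (-z * s)‖ :=
                norm_sub_le _ _
              _ = 1 + Real.exp ((-z * s).re) := by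
                rw [norm_one, Complex.norm_exp]
              _ ≤ 1 + 1 := by
                have : (-z * (s:ℂ)).re = -(z.re * s) := by
                  simp [Complex.mul_re]
                gcongr
                rw [this, ← Real.exp_zero]
                exact Real.exp_le_exp.mpr (by nlinarith)
              _ = 2 := by norm_num
          calc ‖(μ s : ℂ) * (1 - Complex.exp (-z * s))‖
              = μ s * ‖(1:ℂ) - Complex.exp (-z * s)‖ := by rw [norm_mul, h1]
            _ ≤ μ s * 2 := by
                apply mul_le_mul_of_nonneg_left h2 (hpos s hs)
            _ = 2 * μ s := by ring
    _ = 2 * ∫ s in Ioi (0:ℝ), μ s := by rw [MeasureTheory.integral_const_mul]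

/-- `P₂(λ) → 0` as `Re λ → ∞`, uniformly in `Im λ`; explicitly
`|P₂(λ)| ≤ √(2/Re λ) (1 + 2/(e^{√(Re λ)} − 1))` for `Re λ` sufficiently large. -/
theorem stmt12 (μ : ℝ → ℝ) (hpos : ∀ s ∈ Ioi (0 : ℝ), 0 ≤ μ s)
    (hmono : AntitoneOn μ (Ioi 0))
    (hint : IntegrableOn μ (Ioi 0)) :
    (∃ R : ℝ, 0 < R ∧ ∀ z : ℂ, R ≤ z.re →
        ‖P2 μ z‖ ≤ Real.sqrt (2 / z.re) *
          (1 + 2 / (Real.exp (Real.sqrt z.re) - 1))) ∧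
      ∀ ε > (0 : ℝ), ∃ R' : ℝ, ∀ z : ℂ, R' ≤ z.re → ‖P2 μ z‖ < ε := by
  set M := ∫ s in Ioi (0:ℝ), μ s with hMdef
  have hM0 : 0 ≤ M := setIntegral_nonneg measurableSet_Ioi hpos
  set R := 16 * (M + 1) with hRdef
  have hR0 : 0 < R := by positivity
  have key : ∀ z : ℂ, R ≤ z.re → ‖P2 μ z‖ ≤ Real.sqrt (2 / z.re) *
      (1 + 2 / (Real.exp (Real.sqrt z.re) - 1)) := by
    intro z hzR
    have hr0 : 0 < z.re := lt_of_lt_of_le hR0 hzR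
    have hz0 : z ≠ 0 := by
      intro h; rw [h] at hr0; simp at hr0
    have hrz : z.re ≤ ‖z‖ := by
      exact Complex.re_le_norm z
    have hzpos : 0 < ‖z‖ := lt_of_lt_of_le hr0 hrz
    have hell := aux_ell_sub_one_norm μ hpos hint z hr0
    have hRz : R ≤ ‖z‖ := le_trans hzR hrz
    have hsmall : ‖ell μ z - 1‖ ≤ 1/8 := by
      calc ‖ell μ z - 1‖ ≤ ‖z‖⁻¹ * (2*M) := hell
        _ ≤ R⁻¹ * (2*M) := by gcongr
        _ ≤ 1/8 := by
            rw [hRdef, inv_mul_le_iff₀ (by positivity)]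
            linarith
    have habs := abs_le.mp (abs_norm_sub_norm_le (ell μ z) 1)
    rw [norm_one] at habs
    have hl_lo : 7/8 ≤ ‖ell μ z‖ := by
      have := habs.1; linarith
    have hl_hi : ‖ell μ z‖ ≤ 9/8 := by
      have := habs.2; linarith
    have hl0 : ell μ z ≠ 0 := by
      intro h; rw [h] at hl_lo; simp at hl_lo; linarith
    have hzl0 : z * ell μ z ≠ 0 := mul_ne_zero hz0 hl0
    -- denominator lower bound
    have hden : Real.sqrt (z.re / 2) ≤ ‖(z * ell μ z) ^ ((1:ℂ)/2)‖ := by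
      rw [aux_sqrt_norm]
      apply Real.sqrt_le_sqrt
      rw [norm_mul]
      calc z.re/2 ≤ ‖z‖ * (7/8) := by nlinarith
        _ ≤ ‖z‖ * ‖ell μ z‖ := by gcongr
    -- numerator: real part of z / ell is large
    have hu0 : z / ell μ z ≠ 0 := div_ne_zero hz0 hl0
    have hdiff2 : ‖z / ell μ z - z‖ ≤ 3 * M := by
      have heq : z / ell μ z - z = z * (1 - ell μ z) / ell μ z := by
        field_simp
      rw [heq, norm_div, norm_mul]
      have h1m : ‖(1:ℂ) - ell μ z‖ ≤ ‖z‖⁻¹ * (2*M) := by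
        rw [norm_sub_rev]; exact hell
      calc ‖z‖ * ‖(1:ℂ) - ell μ z‖ / ‖ell μ z‖
          ≤ ‖z‖ * (‖z‖⁻¹ * (2*M)) / (7/8) := by gcongr
        _ = (2*M) * (8/7) := by
            rw [mul_inv_cancel_left₀ hzpos.ne', div_eq_mul_inv]
            norm_num
        _ ≤ 3*M := by linarith
    have hure : z.re / 4 ≤ (z / ell μ z).re := by
      have h := abs_le.mp (Complex.abs_re_le_norm (z / ell μ z - z))
      have hsub : (z / ell μ z - z).re = (z / ell μ z).re - z.re := by
        simp [Complex.sub_re]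
      rw [hsub] at h
      have h1 := h.1
      nlinarith [hdiff2]
    have hw : Real.sqrt z.re / 2 ≤ ((z / ell μ z) ^ ((1:ℂ)/2)).re := by
      have hq : Real.sqrt (z.re / 4) = Real.sqrt z.re / 2 := by
        rw [show z.re / 4 = z.re * (1/4) by ring, Real.sqrt_mul hr0.le,
          show Real.sqrt (1/4 : ℝ) = 1/2 by
            rw [show (1/4:ℝ) = (1/2)^2 by norm_num, Real.sqrt_sq (by norm_num)]]
        ring
      calc Real.sqrt z.re / 2 = Real.sqrt (z.re / 4) := hq.symm
        _ ≤ Real.sqrt ((z / ell μ z).re) := Real.sqrt_le_sqrt hure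
        _ ≤ _ := aux_sqrt_re_ge _ hu0 (le_trans (by positivity) hure)
    have hwpos : 0 < ((z / ell μ z) ^ ((1:ℂ)/2)).re := by
      have : 0 < Real.sqrt z.re / 2 := by positivity
      linarith
    have hexp1 : 1 < Real.exp (Real.sqrt z.re) := by
      rw [← Real.exp_zero]
      exact Real.exp_lt_exp.mpr (by positivity)
    have htanh2 : ‖Complex.tanh ((z / ell μ z) ^ ((1:ℂ)/2))‖ ≤
        1 + 2 / (Real.exp (Real.sqrt z.re) - 1) := by
      refine (aux_tanh_norm_le _ hwpos).trans ?_
      gcongr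
      · linarith
    have hinv : ‖(z * ell μ z) ^ ((1:ℂ)/2)‖⁻¹ ≤ Real.sqrt (2 / z.re) := by
      have h24 : Real.sqrt (2 / z.re) = (Real.sqrt (z.re / 2))⁻¹ := by
        rw [← Real.sqrt_inv, inv_div]
      rw [h24]
      exact inv_anti₀ (by positivity) hden
    rw [P2, norm_div]
    calc ‖Complex.tanh ((z / ell μ z) ^ ((1:ℂ)/2))‖ / ‖(z * ell μ z) ^ ((1:ℂ)/2)‖
        = ‖Complex.tanh ((z / ell μ z) ^ ((1:ℂ)/2))‖ * ‖(z * ell μ z) ^ ((1:ℂ)/2)‖⁻¹ :=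
          div_eq_mul_inv _ _
      _ ≤ (1 + 2 / (Real.exp (Real.sqrt z.re) - 1)) * Real.sqrt (2 / z.re) := by
          apply mul_le_mul htanh2 hinv (by positivity) ?_
          have : 0 ≤ 2 / (Real.exp (Real.sqrt z.re) - 1) :=
            div_nonneg (by norm_num) (by linarith)
          linarith
      _ = Real.sqrt (2 / z.re) * (1 + 2 / (Real.exp (Real.sqrt z.re) - 1)) := mul_comm _ _
  refine ⟨⟨R, hR0, key⟩, ?_⟩
  intro ε hε
  refine ⟨max R (max 1 (32/ε^2)), ?_⟩
  intro z hz
  have hzR : R ≤ z.re := le_trans (le_max_left _ _) hz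
  have h1 : 1 ≤ z.re := le_trans ((le_max_left _ _).trans (le_max_right _ _)) hz
  have h32 : 32/ε^2 ≤ z.re := le_trans ((le_max_right _ _).trans (le_max_right _ _)) hz
  have hr0 : 0 < z.re := by linarith
  have hb := key z hzR
  have hs1 : 1 ≤ Real.sqrt z.re := by
    rw [show (1:ℝ) = Real.sqrt 1 by simp]
    exact Real.sqrt_le_sqrt h1
  have he : 2 ≤ Real.exp (Real.sqrt z.re) := by
    calc (2:ℝ) = 1 + 1 := by norm_num
      _ ≤ Real.exp 1 := Real.add_one_le_exp 1
      _ ≤ Real.exp (Real.sqrt z.re) := Real.exp_le_exp.mpr hs1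
  have hfac : 1 + 2 / (Real.exp (Real.sqrt z.re) - 1) ≤ 3 := by
    have h2 : 2 / (Real.exp (Real.sqrt z.re) - 1) ≤ 2 := by
      rw [div_le_iff₀ (by linarith)]
      linarith
    linarith
  have hfac0 : 0 ≤ 1 + 2 / (Real.exp (Real.sqrt z.re) - 1) := by
    have : 0 ≤ 2 / (Real.exp (Real.sqrt z.re) - 1) :=
      div_nonneg (by norm_num) (by linarith)
    linarith
  have hsq : Real.sqrt (2 / z.re) ≤ ε / 4 := by
    have h2r : 2 / z.re ≤ ε^2 / 16 := by
      rw [div_le_div_iff₀ hr0 (by norm_num)]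
      rw [div_le_iff₀ (by positivity)] at h32
      nlinarith
    calc Real.sqrt (2 / z.re) ≤ Real.sqrt (ε^2/16) := Real.sqrt_le_sqrt h2r
      _ = ε/4 := by
          rw [show ε^2/16 = (ε/4)^2 by ring, Real.sqrt_sq (by positivity)]
  calc ‖P2 μ z‖ ≤ Real.sqrt (2 / z.re) * (1 + 2 / (Real.exp (Real.sqrt z.re) - 1)) := hb
    _ ≤ (ε/4) * 3 := mul_le_mul hsq hfac hfac0 (by positivity)
    _ < ε := by linarith
end

section
/- With ℓ and P₂ as defined via a non-increasing integrable μ with condition μ(t+s) ≤ C e^{-δt} μ(s), the boundary values satisfy the asymptotics P₂(is) = (1 ∓ i)/(√2 |s|^{1/2}) + O(|s|^{-3/2}) as s → ±∞. In particular, Re P₂(is) ~ 1/(√2 |s|^{1/2}) as |s| → ∞. -/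
set_option maxHeartbeats 1600000

open MeasureTheory Set Filter

section Helpers


lemma sq_half (w : ℂ) : (w ^ ((1:ℂ)/2)) ^ 2 = w := by
  rw [one_div]
  exact Complex.cpow_ofNat_inv_pow w 2

lemma re_half_nonneg (w : ℂ) : 0 ≤ (w ^ ((1:ℂ)/2)).re := by
  rcases eq_or_ne w 0 with h | h
  · simp [h, Complex.zero_cpow (by norm_num : (1:ℂ)/2 ≠ 0)]
  · rw [Complex.cpow_def_of_ne_zero h, Complex.exp_re]
    apply mul_nonneg (Real.exp_nonneg _)
    apply Real.cos_nonneg_of_mem_Icc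
    constructor
    · have := Complex.neg_pi_lt_arg w
      simp [Complex.log_im]
      nlinarith [Real.pi_pos]
    · have := Complex.arg_le_pi w
      simp [Complex.log_im]
      nlinarith

lemma norm_half (w : ℂ) : ‖w ^ ((1:ℂ)/2)‖ = Real.sqrt ‖w‖ := by
  have h := congrArg (fun z : ℂ => ‖z‖) (sq_half w)
  simp only [norm_pow] at h
  rw [← h, sq, Real.sqrt_mul_self (norm_nonneg _)]

lemma two_re_sq_half (w : ℂ) : 2 * ((w ^ ((1:ℂ)/2)).re)^2 = ‖w‖ + w.re := by
  set u := w ^ ((1:ℂ)/2) with hu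
  have h1 : u ^ 2 = w := sq_half w
  have h2 : (u^2).re = u.re^2 - u.im^2 := by
    simp [sq, Complex.mul_re]
  have h3 : ‖w‖ = u.re^2 + u.im^2 := by
    have h5 : ‖u‖^2 = ‖w‖ := by
      have := norm_half w
      rw [← hu] at this
      rw [this, Real.sq_sqrt (norm_nonneg _)]
    rw [Complex.sq_norm, Complex.normSq_apply] at h5
    rw [← h5]
    ring
  rw [h3, ← h1, h2]
  ring

lemma half_unique {w v : ℂ} (hv2 : v ^ 2 = w) (hv : 0 < v.re) : w ^ ((1:ℂ)/2) = v := by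
  set u := w ^ ((1:ℂ)/2) with hu
  have h1 : u ^ 2 = v ^ 2 := by rw [sq_half w, hv2]
  have h2 : (u - v) * (u + v) = 0 := by ring_nf; linear_combination h1
  rcases mul_eq_zero.1 h2 with h | h
  · exact sub_eq_zero.1 h
  · exfalso
    have huv : u = -v := eq_neg_of_add_eq_zero_left h
    have hre : u.re = -v.re := by rw [huv]; simp
    have h6 := re_half_nonneg w
    rw [← hu, hre] at h6
    linarith

lemma sub_half_le (a b : ℂ) :
    ‖a ^ ((1:ℂ)/2) - b ^ ((1:ℂ)/2)‖ * ((a^((1:ℂ)/2)).re + (b^((1:ℂ)/2)).re) ≤ ‖a - b‖ := by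
  set u := a ^ ((1:ℂ)/2) with hu
  set v := b ^ ((1:ℂ)/2) with hv
  have h1 : (u - v) * (u + v) = a - b := by
    have h2 := sq_half a
    have h3 := sq_half b
    rw [← hu] at h2
    rw [← hv] at h3
    linear_combination h2 - h3
  have h4 : u.re + v.re ≤ ‖u + v‖ := by
    have := Complex.re_le_norm (u + v)
    simpa using this
  calc ‖u - v‖ * (u.re + v.re) ≤ ‖u - v‖ * ‖u + v‖ :=
        mul_le_mul_of_nonneg_left h4 (norm_nonneg _)
  _ = ‖(u-v)*(u+v)‖ := (norm_mul _ _).symm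
  _ = ‖a - b‖ := by rw [h1]

lemma csinh_eq (z : ℂ) : Complex.sinh z = (Complex.exp z - Complex.exp (-z)) / 2 := rfl
lemma ccosh_eq (z : ℂ) : Complex.cosh z = (Complex.exp z + Complex.exp (-z)) / 2 := rfl

lemma tanh_sub_one {q : ℂ} (hq : 1 ≤ q.re) : ‖Complex.tanh q - 1‖ ≤ 4 * Real.exp (-(2*q.re)) := by
  set c := Complex.exp q with hc'
  have hc : c ≠ 0 := Complex.exp_ne_zero q
  set d := Complex.exp (2*q) with hd'
  have hdc : d = c * c := by rw [hd', hc', two_mul, Complex.exp_add]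
  have hE : ‖d‖ = Real.exp (2*q.re) := by
    rw [hd', Complex.norm_exp]
    norm_num
  have hE3 : (3:ℝ) ≤ ‖d‖ := by
    rw [hE]
    calc (3:ℝ) = 2 + 1 := by norm_num
    _ ≤ Real.exp 2 := Real.add_one_le_exp 2
    _ ≤ Real.exp (2*q.re) := Real.exp_le_exp.2 (by linarith)
  have hd1 : d + 1 ≠ 0 := by
    intro h
    have : d = -1 := by linear_combination h
    rw [this] at hE3
    norm_num at hE3
  have hcosh : Complex.cosh q ≠ 0 := by
    rw [ccosh_eq, Complex.exp_neg, ← hc']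
    intro h
    apply hd1
    rw [hdc]
    field_simp at h
    linear_combination h
  have h1c : (1:ℂ) + c^2 ≠ 0 := by
    intro h
    apply hd1
    rw [hdc]
    linear_combination h
  have hid : Complex.tanh q - 1 = -2/(d+1) := by
    rw [Complex.tanh_eq_sinh_div_cosh, csinh_eq, ccosh_eq, Complex.exp_neg, ← hc', hdc]
    rw [ccosh_eq, Complex.exp_neg, ← hc'] at hcosh
    have ht : ((1:ℂ)+c^2) * ((1:ℂ)+c^2)⁻¹ = 1 := mul_inv_cancel₀ h1c
    field_simp
    linear_combination ht
  rw [hid]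
  have hlow : Real.exp (2*q.re) / 2 ≤ ‖d+1‖ := by
    have h1 : ‖d‖ - ‖(-1 : ℂ)‖ ≤ ‖d + 1‖ := by
      simpa using norm_sub_norm_le d (-1)
    simp only [norm_neg, norm_one] at h1
    rw [hE] at h1 hE3
    linarith
  rw [norm_div]
  have h2 : ‖(-2:ℂ)‖ = 2 := by simp
  rw [h2, Real.exp_neg]
  rw [div_le_iff₀ (lt_of_lt_of_le (by positivity) hlow)]
  have hEpos : (0:ℝ) < Real.exp (2*q.re) := Real.exp_pos _
  have key := mul_le_mul_of_nonneg_left hlow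
    (by positivity : (0:ℝ) ≤ 4 * (Real.exp (2*q.re))⁻¹)
  calc (2:ℝ) = 4 * (Real.exp (2*q.re))⁻¹ * (Real.exp (2*q.re)/2) := by
        field_simp
        norm_num
  _ ≤ 4 * (Real.exp (2 * q.re))⁻¹ * ‖d+1‖ := key

lemma exp_beats_cube {t : ℝ} (ht : 1024 ≤ t) : 4 * Real.exp (-t) ≤ (t^3)⁻¹ := by
  have ht0 : (0:ℝ) < t := by linarith
  have hq : t/4 ≤ Real.exp (t/4) := by
    have := Real.add_one_le_exp (t/4)
    linarith
  have hq4 : (t/4)^4 ≤ Real.exp t := by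
    have h1 : (t/4)^4 ≤ (Real.exp (t/4))^4 :=
      pow_le_pow_left₀ (by linarith) hq 4
    have h2 : (Real.exp (t/4))^4 = Real.exp t := by
      rw [← Real.exp_nat_mul]
      congr 1
      push_cast
      ring
    linarith
  have h3 : 4 * t^3 ≤ Real.exp t := by
    nlinarith [pow_pos ht0 3, pow_pos ht0 4]
  rw [Real.exp_neg]
  have ht3 : (0:ℝ) < t^3 := by positivity
  have hexp : (0:ℝ) < Real.exp t := Real.exp_pos t
  rw [show (4:ℝ) * (Real.exp t)⁻¹ = 4 / Real.exp t by ring,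
      inv_eq_one_div, div_le_div_iff₀ hexp ht3]
  linarith


end Helpers

noncomputable def tgt (s : ℝ) : ℂ :=
  (1 - ((if 0 < s then (1:ℝ) else -1) : ℂ) * Complex.I) /
    ((Real.sqrt 2 : ℂ) * ((Real.sqrt |s| : ℝ) : ℂ))


lemma rpow_neg_three_half {x : ℝ} (hx : 0 ≤ x) : x ^ (-(3:ℝ)/2) = ((Real.sqrt x)^3)⁻¹ := by
  rw [show (-(3:ℝ)/2) = -((3:ℝ)/2) by norm_num, Real.rpow_neg hx]
  congr 1
  rw [show ((3:ℝ)/2) = (1/2)*(3:ℕ) by norm_num, Real.rpow_mul hx,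
      Real.rpow_natCast, ← Real.sqrt_eq_rpow]


lemma key_s13 (μ : ℝ → ℝ) (hint : IntegrableOn μ (Ioi 0)) :
    ∃ K R : ℝ, 1 ≤ K ∧ 1 ≤ R ∧ ∀ s : ℝ, R ≤ |s| →
      ‖P2 μ (Complex.I * s) - tgt s‖ ≤ K * |s| ^ (-(3:ℝ)/2) := by
  set M₀ : ℝ := ∫ r in Ioi (0:ℝ), ‖μ r‖ with hM₀def
  have hM₀ : 0 ≤ M₀ := integral_nonneg (fun _ => norm_nonneg _)
  set M : ℝ := 2*M₀ + 2 with hMdef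
  have hM2 : (2:ℝ) ≤ M := by simp [hMdef]; linarith
  refine ⟨1 + 4*M, max (6*10^6) (12*M), by linarith, le_max_of_le_left (by norm_num), ?_⟩
  intro s hsR
  have hs6 : 6*10^6 ≤ |s| := le_trans (le_max_left _ _) hsR
  have hsM : 12*M ≤ |s| := le_trans (le_max_right _ _) hsR
  have hs0 : (0:ℝ) < |s| := by linarith
  have hsne : s ≠ 0 := by
    intro h; rw [h] at hs0; simp at hs0
  -- sign
  set σ : ℝ := if 0 < s then (1:ℝ) else -1 with hσdef
  have hσ2 : σ^2 = 1 := by rcases le_or_gt s 0 with h | h <;> simp [hσdef] <;> split <;> norm_num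
  have hσs : σ * |s| = s := by
    rcases lt_or_gt_of_ne hsne with h | h
    · rw [hσdef, if_neg (by linarith), abs_of_neg h]; ring
    · rw [hσdef, if_pos h, abs_of_pos h]; ring
  -- sqrt
  set t : ℝ := Real.sqrt |s| with htdef
  have ht0 : 0 < t := Real.sqrt_pos.2 hs0
  have hts : t^2 = |s| := Real.sq_sqrt (abs_nonneg s)
  have ht1024 : 1024 ≤ t := by
    by_contra h
    push_neg at h
    nlinarith
  -- z
  set z : ℂ := Complex.I * (s:ℂ) with hzdef
  have hzn : ‖z‖ = |s| := by
    rw [hzdef, norm_mul, Complex.norm_I, Complex.norm_real, Real.norm_eq_abs, one_mul]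
  have hz : z ≠ 0 := by
    intro h; rw [h, norm_zero] at hzn; linarith
  have hzre : z.re = 0 := by simp [hzdef]
  -- the integral
  set E : ℂ := ∫ r in Ioi (0:ℝ), (μ r : ℂ) * (1 - Complex.exp (-z * r)) with hEdef
  have hE : ‖E‖ ≤ 2 * M₀ := by
    have hbd : ∀ r : ℝ, ‖(μ r : ℂ) * (1 - Complex.exp (-z * r))‖ ≤ 2 * ‖μ r‖ := by
      intro r
      rw [norm_mul, Complex.norm_real, Real.norm_eq_abs]
      have h1 : ‖(1:ℂ) - Complex.exp (-z * r)‖ ≤ 2 := by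
        have h2 : ‖Complex.exp (-z * r)‖ = 1 := by
          rw [Complex.norm_exp]
          have : (-z * (r:ℂ)).re = 0 := by
            simp [hzdef, Complex.mul_re]
          rw [this, Real.exp_zero]
        calc ‖(1:ℂ) - Complex.exp (-z * r)‖ ≤ ‖(1:ℂ)‖ + ‖Complex.exp (-z * r)‖ :=
              norm_sub_le _ _
        _ = 2 := by rw [h2, norm_one]; norm_num
      calc |μ r| * ‖(1:ℂ) - Complex.exp (-z * r)‖ ≤ |μ r| * 2 :=
            mul_le_mul_of_nonneg_left h1 (abs_nonneg _)
      _ = 2 * ‖μ r‖ := by rw [Real.norm_eq_abs]; ring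
    have hgint : IntegrableOn (fun r => 2 * ‖μ r‖) (Ioi (0:ℝ)) := hint.norm.const_mul 2
    calc ‖E‖ ≤ ∫ r in Ioi (0:ℝ), 2 * ‖μ r‖ :=
          norm_integral_le_of_norm_le hgint (Filter.Eventually.of_forall hbd)
    _ = 2 * M₀ := by rw [hM₀def, MeasureTheory.integral_const_mul]
  have hEM : ‖E‖ ≤ M := by rw [hMdef]; linarith
  -- ℓ
  set ℓ : ℂ := ell μ z with hldef
  have hl1 : ‖ℓ - 1‖ ≤ M / |s| := by
    have : ℓ - 1 = z⁻¹ * E := by rw [hldef]; unfold ell; rw [← hEdef]; ring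
    rw [this, norm_mul, norm_inv, hzn]
    rw [inv_mul_eq_div]
    gcongr
  have hMs : M / |s| ≤ 1/12 := by
    rw [div_le_div_iff₀ hs0 (by norm_num)]
    linarith
  have hl_lb : 1/2 ≤ ‖ℓ‖ := by
    have h1 : ‖(1:ℂ)‖ - ‖ℓ‖ ≤ ‖(1:ℂ) - ℓ‖ := norm_sub_norm_le _ _
    rw [norm_one, norm_sub_rev] at h1
    linarith [hl1.trans hMs]
  have hl_ub : ‖ℓ‖ ≤ 3/2 := by
    have h1 : ‖ℓ‖ - ‖(1:ℂ)‖ ≤ ‖ℓ - 1‖ := norm_sub_norm_le _ _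
    rw [norm_one] at h1
    linarith [hl1.trans hMs]
  have hlne : ℓ ≠ 0 := by
    intro h; rw [h, norm_zero] at hl_lb; linarith
  -- w₁, p
  set w₁ : ℂ := z * ℓ with hw1def
  have hw1ne : w₁ ≠ 0 := mul_ne_zero hz hlne
  have hw1n : |s|/2 ≤ ‖w₁‖ := by
    rw [hw1def, norm_mul, hzn]
    nlinarith
  set p : ℂ := w₁ ^ ((1:ℂ)/2) with hpdef
  have hp_lb : t/2 ≤ ‖p‖ := by
    rw [hpdef, norm_half]
    rw [show t/2 = Real.sqrt (|s|/4) by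
      rw [show |s|/4 = (t/2)^2 by rw [← hts]; ring, Real.sqrt_sq (by linarith)]]
    exact Real.sqrt_le_sqrt (by linarith)
  have hp1 : (1:ℝ) ≤ ‖p‖ := by linarith
  have hpne : p ≠ 0 := by
    intro h; rw [h, norm_zero] at hp1; linarith
  -- u = √z explicit
  set X : ℂ := ((t / Real.sqrt 2 : ℝ) : ℂ) with hXdef
  set v : ℂ := X * (1 + (σ:ℂ) * Complex.I) with hvdef
  have hs2ne : Real.sqrt 2 ≠ 0 := by positivity
  have hX2 : X^2 = ((|s| : ℝ) : ℂ)/2 := by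
    have hre : (t/Real.sqrt 2)^2 = |s|/2 := by
      rw [div_pow, Real.sq_sqrt (by norm_num : (0:ℝ) ≤ 2), hts]
    rw [hXdef,
      show ((t / Real.sqrt 2 : ℝ):ℂ)^2 = (((t/Real.sqrt 2)^2 : ℝ) : ℂ) by push_cast; ring,
      hre]
    push_cast
    ring
  have hσc : ((σ:ℝ):ℂ)^2 = 1 := by exact_mod_cast congrArg (fun x : ℝ => (x:ℂ)) hσ2
  have hσsc : ((σ:ℝ):ℂ) * ((|s|:ℝ):ℂ) = ((s:ℝ):ℂ) := by exact_mod_cast congrArg (fun x : ℝ => (x:ℂ)) hσs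
  have hI : Complex.I^2 = -1 := Complex.I_sq
  have hv2 : v^2 = z := by
    rw [hvdef, hzdef]
    linear_combination ((1 + (σ:ℂ)*Complex.I)^2) * hX2 + (((|s|:ℝ):ℂ)/2)*Complex.I^2 * hσc
      + (((|s|:ℝ):ℂ)/2) * hI + Complex.I * hσsc
  have hvre : 0 < v.re := by
    rw [hvdef]
    have : v.re = (t/Real.sqrt 2) * 1 := by
      rw [hvdef, hXdef]
      simp [Complex.mul_re]
    rw [hvdef] at this
    rw [this]
    have : 0 < Real.sqrt 2 := by positivity
    positivity
  have hu : z ^ ((1:ℂ)/2) = v := half_unique hv2 hvre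
  have hure : t / Real.sqrt 2 ≤ (z ^ ((1:ℂ)/2)).re := by
    rw [hu, hvdef, hXdef]
    have : (X * (1 + (σ:ℂ) * Complex.I)).re = (t/Real.sqrt 2) * 1 := by
      rw [hXdef]
      simp [Complex.mul_re]
    rw [← hXdef, this, mul_one]
  have hune : z ^ ((1:ℂ)/2) ≠ 0 := by
    intro h
    rw [h] at hure
    simp at hure
    have : 0 < Real.sqrt 2 := by positivity
    have := div_pos ht0 this
    linarith
  have hun : ‖z ^ ((1:ℂ)/2)‖ = t := by rw [norm_half, hzn, htdef]
  -- u⁻¹ = tgt s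
  have htgt : tgt s = (1 - (σ:ℂ)*Complex.I) / ((Real.sqrt 2:ℂ) * ((t:ℝ):ℂ)) := by
    unfold tgt
    rw [hσdef, htdef]
    split_ifs <;> norm_num
  have hui : (z ^ ((1:ℂ)/2))⁻¹ = tgt s := by
    rw [hu, htgt]
    apply inv_eq_of_mul_eq_one_right
    rw [hvdef]
    have htne : ((t:ℝ):ℂ) ≠ 0 := by
      exact_mod_cast ne_of_gt ht0
    have hs2cne : ((Real.sqrt 2 : ℝ):ℂ) ≠ 0 := by exact_mod_cast hs2ne
    have hXs2 : X * ((Real.sqrt 2:ℝ):ℂ) = ((t:ℝ):ℂ) := by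
      rw [hXdef]
      push_cast
      field_simp
    have h2c : ((Real.sqrt 2:ℝ):ℂ)^2 = 2 := by
      exact_mod_cast Real.sq_sqrt (by norm_num : (0:ℝ) ≤ 2)
    rw [← mul_div_assoc, div_eq_iff (mul_ne_zero hs2cne htne)]
    linear_combination (-X) * h2c + ((Real.sqrt 2:ℝ):ℂ) * hXs2 - X * Complex.I^2 * hσc - X * hI
  -- w₂, q
  set w₂ : ℂ := z / ℓ with hw2def
  set q : ℂ := w₂ ^ ((1:ℂ)/2) with hqdef
  have hw2n : 2*|s|/3 ≤ ‖w₂‖ := by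
    rw [hw2def, norm_div, hzn]
    rw [le_div_iff₀ (by linarith : (0:ℝ) < ‖ℓ‖)]
    nlinarith [mul_le_mul_of_nonneg_left hl_ub (by positivity : (0:ℝ) ≤ 2*|s|/3)]
  have hw2z : ‖w₂ - z‖ ≤ 2*M := by
    have hid : w₂ - z = z * (1 - ℓ) / ℓ := by
      rw [hw2def]
      field_simp
    rw [hid, norm_div, norm_mul, hzn, norm_sub_rev]
    rw [div_le_iff₀ (by linarith : (0:ℝ) < ‖ℓ‖)]
    have h1 : |s| * ‖ℓ - 1‖ ≤ M := by
      calc |s| * ‖ℓ - 1‖ ≤ |s| * (M/|s|) := mul_le_mul_of_nonneg_left hl1 (le_of_lt hs0)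
      _ = M := by field_simp
    nlinarith [norm_nonneg (ℓ - 1), hM2]
  have hw2re : -(2*M) ≤ w₂.re := by
    have h1 : |(w₂ - z).re| ≤ ‖w₂ - z‖ := Complex.abs_re_le_norm _
    have h2 : (w₂ - z).re = w₂.re := by rw [Complex.sub_re, hzre]; ring
    rw [h2] at h1
    have := neg_abs_le w₂.re
    linarith [abs_le.1 h1]
  have hqre : t/2 ≤ q.re := by
    have h1 : 2 * (q.re)^2 = ‖w₂‖ + w₂.re := two_re_sq_half w₂
    have h2 : |s|/2 ≤ 2 * (q.re)^2 := by
      rw [h1]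
      have : 2*M ≤ |s|/6 := by linarith
      linarith
    have h3 : (t/2)^2 ≤ (q.re)^2 := by
      rw [show (t/2)^2 = t^2/4 by ring, hts]
      linarith
    have h4 := re_half_nonneg w₂
    rw [← hqdef] at h4
    calc t/2 = Real.sqrt ((t/2)^2) := (Real.sqrt_sq (by linarith)).symm
    _ ≤ Real.sqrt ((q.re)^2) := Real.sqrt_le_sqrt h3
    _ = q.re := Real.sqrt_sq h4
  have hq1 : 1 ≤ q.re := by linarith
  -- tanh bound
  have htanh : ‖Complex.tanh q - 1‖ ≤ (t^3)⁻¹ := by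
    calc ‖Complex.tanh q - 1‖ ≤ 4 * Real.exp (-(2*q.re)) := tanh_sub_one hq1
    _ ≤ 4 * Real.exp (-t) := by
        have : -(2*q.re) ≤ -t := by linarith
        have := Real.exp_le_exp.2 this
        linarith
    _ ≤ (t^3)⁻¹ := exp_beats_cube ht1024
  -- ‖u - p‖ bound
  have hup : ‖z ^ ((1:ℂ)/2) - p‖ ≤ 2*M/t := by
    have h1 := sub_half_le z w₁
    rw [← hpdef] at h1
    have h2 : ‖z - w₁‖ ≤ M := by
      have hid : z - w₁ = z * (1 - ℓ) := by rw [hw1def]; ring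
      rw [hid, norm_mul, hzn, norm_sub_rev]
      calc |s| * ‖ℓ - 1‖ ≤ |s| * (M/|s|) := mul_le_mul_of_nonneg_left hl1 (le_of_lt hs0)
      _ = M := by field_simp
    have h3 : t/2 ≤ (z ^ ((1:ℂ)/2)).re + (w₁ ^ ((1:ℂ)/2)).re := by
      have h4 := re_half_nonneg w₁
      have h5 : t / Real.sqrt 2 ≤ (z ^ ((1:ℂ)/2)).re := hure
      have h6 : t/2 ≤ t/Real.sqrt 2 := by
        apply div_le_div_of_nonneg_left (le_of_lt ht0) (by positivity)
        nlinarith [Real.sq_sqrt (by norm_num : (0:ℝ) ≤ 2), Real.sqrt_nonneg 2]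
      linarith
    rw [← hpdef] at h3
    have h7 : ‖z ^ ((1:ℂ)/2) - p‖ * (t/2) ≤ M := by
      calc ‖z ^ ((1:ℂ)/2) - p‖ * (t/2)
          ≤ ‖z ^ ((1:ℂ)/2) - p‖ * ((z ^ ((1:ℂ)/2)).re + (p).re) :=
            mul_le_mul_of_nonneg_left h3 (norm_nonneg _)
      _ ≤ ‖z - w₁‖ := h1
      _ ≤ M := h2
    calc ‖z ^ ((1:ℂ)/2) - p‖ = (‖z ^ ((1:ℂ)/2) - p‖ * (t/2)) * (2/t) := by
          field_simp
    _ ≤ M * (2/t) := mul_le_mul_of_nonneg_right h7 (by positivity)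
    _ = 2*M/t := by ring
  -- B bound
  have hB : ‖p⁻¹ - (z ^ ((1:ℂ)/2))⁻¹‖ ≤ 4*M/t^3 := by
    have hid : p⁻¹ - (z ^ ((1:ℂ)/2))⁻¹ = (z ^ ((1:ℂ)/2) - p) / (p * z ^ ((1:ℂ)/2)) := by
      field_simp
    rw [hid, norm_div, norm_mul, hun]
    rw [div_le_div_iff₀ (by positivity) (by positivity)]
    have h8 : t/2 * t ≤ ‖p‖ * t := mul_le_mul_of_nonneg_right hp_lb (le_of_lt ht0)
    calc ‖z ^ ((1:ℂ)/2) - p‖ * t^3 ≤ (2*M/t) * t^3 :=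
          mul_le_mul_of_nonneg_right hup (by positivity)
    _ = (4*M) * (t/2 * t) := by field_simp; ring
    _ ≤ (4*M) * (‖p‖ * t) := mul_le_mul_of_nonneg_left h8 (by nlinarith)
  -- assemble
  have hP2 : P2 μ z = Complex.tanh q / p := rfl
  have hsplit : P2 μ z - tgt s =
      (Complex.tanh q - 1) * p⁻¹ + (p⁻¹ - (z ^ ((1:ℂ)/2))⁻¹) := by
    rw [hP2, ← hui, div_eq_mul_inv]
    ring
  have hpinv : ‖p⁻¹‖ ≤ 1 := by
    rw [norm_inv]
    rw [inv_le_one_iff₀]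
    right; exact hp1
  have hnorm : ‖P2 μ z - tgt s‖ ≤ (t^3)⁻¹ + 4*M/t^3 := by
    rw [hsplit]
    calc ‖(Complex.tanh q - 1) * p⁻¹ + (p⁻¹ - (z ^ ((1:ℂ)/2))⁻¹)‖
        ≤ ‖(Complex.tanh q - 1) * p⁻¹‖ + ‖p⁻¹ - (z ^ ((1:ℂ)/2))⁻¹‖ := norm_add_le _ _
    _ ≤ (t^3)⁻¹ + 4*M/t^3 := by
        apply add_le_add _ hB
        rw [norm_mul]
        calc ‖Complex.tanh q - 1‖ * ‖p⁻¹‖ ≤ (t^3)⁻¹ * 1 :=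
              mul_le_mul htanh hpinv (norm_nonneg _) (by positivity)
        _ = (t^3)⁻¹ := mul_one _
  -- convert
  have hrpow : |s| ^ (-(3:ℝ)/2) = (t^3)⁻¹ := by
    rw [show (-(3:ℝ)/2) = -((3:ℝ)/2) by norm_num, Real.rpow_neg (abs_nonneg s)]
    congr 1
    rw [show ((3:ℝ)/2) = (1/2)*(3:ℕ) by norm_num, Real.rpow_mul (abs_nonneg s),
        Real.rpow_natCast, ← Real.sqrt_eq_rpow, htdef]
  rw [hrpow]
  calc ‖P2 μ z - tgt s‖ ≤ (t^3)⁻¹ + 4*M/t^3 := hnorm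
  _ = (1 + 4*M) * (t^3)⁻¹ := by field_simp


/-- Boundary asymptotics: `P₂(is) = (1 ∓ i)/(√2 |s|^{1/2}) + O(|s|^{-3/2})` as
`s → ±∞`; in particular `Re P₂(is) ∼ 1/(√2 |s|^{1/2})` as `|s| → ∞`. -/
theorem stmt13 (μ : ℝ → ℝ) (hpos : ∀ s ∈ Ioi (0 : ℝ), 0 ≤ μ s)
    (hmono : AntitoneOn μ (Ioi 0))
    (hint : IntegrableOn μ (Ioi 0))
    (C δ : ℝ) (hC : 1 ≤ C) (hδ : 0 < δ)
    (hdecay : ∀ t ≥ (0 : ℝ), ∀ s > (0 : ℝ), μ (t + s) ≤ C * Real.exp (-δ * t) * μ s) :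
    (∃ K R : ℝ, 0 < K ∧ 0 < R ∧
        (∀ s : ℝ, R ≤ s →
          ‖P2 μ (Complex.I * s) - (1 - Complex.I) / ((Real.sqrt 2 : ℂ) * (Real.sqrt s : ℂ))‖ ≤
            K * |s| ^ (-(3 : ℝ) / 2)) ∧
        (∀ s : ℝ, s ≤ -R →
          ‖P2 μ (Complex.I * s) - (1 + Complex.I) / ((Real.sqrt 2 : ℂ) * (Real.sqrt |s| : ℂ))‖ ≤
            K * |s| ^ (-(3 : ℝ) / 2))) ∧
      Tendsto (fun s : ℝ => (P2 μ (Complex.I * s)).re * (Real.sqrt 2 * Real.sqrt |s|))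
        atTop (nhds 1) ∧
      Tendsto (fun s : ℝ => (P2 μ (Complex.I * s)).re * (Real.sqrt 2 * Real.sqrt |s|))
        atBot (nhds 1) := by
  obtain ⟨K, R, hK, hR, hkey⟩ := key_s13 μ hint
  have hK0 : (0:ℝ) < K := by linarith
  have hR0 : (0:ℝ) < R := by linarith
  -- real part bound
  have hre : ∀ s : ℝ, R ≤ |s| →
      |(P2 μ (Complex.I * s)).re * (Real.sqrt 2 * Real.sqrt |s|) - 1| ≤ Real.sqrt 2 * K / |s| := by
    intro s hs
    have hs0 : (0:ℝ) < |s| := lt_of_lt_of_le hR0 hs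
    set t : ℝ := Real.sqrt |s| with htdef
    have ht0 : 0 < t := Real.sqrt_pos.2 hs0
    have hts : t^2 = |s| := Real.sq_sqrt (abs_nonneg s)
    have hs2 : (0:ℝ) < Real.sqrt 2 := by positivity
    have h := hkey s hs
    have htre : (tgt s).re = 1/(Real.sqrt 2 * t) := by
      unfold tgt
      rw [show (Real.sqrt 2 : ℂ) * ((Real.sqrt |s| : ℝ):ℂ)
            = ((Real.sqrt 2 * Real.sqrt |s| : ℝ) : ℂ) by push_cast; ring]
      rw [Complex.div_ofReal_re]
      rw [← htdef]
      congr 1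
      split_ifs <;> simp
    have hsubre : |(P2 μ (Complex.I * s)).re - (tgt s).re| ≤ K * |s| ^ (-(3:ℝ)/2) := by
      have h1 : (P2 μ (Complex.I * s) - tgt s).re
          = (P2 μ (Complex.I * s)).re - (tgt s).re := Complex.sub_re _ _
      have h2 : |(P2 μ (Complex.I * s) - tgt s).re| ≤ ‖P2 μ (Complex.I * s) - tgt s‖ := by
        exact Complex.abs_re_le_norm _
      rw [h1] at h2
      linarith
    have hone : (1/(Real.sqrt 2 * t)) * (Real.sqrt 2 * t) = 1 := by
      field_simp
    have hid : (P2 μ (Complex.I * s)).re * (Real.sqrt 2 * t) - 1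
        = ((P2 μ (Complex.I * s)).re - (tgt s).re) * (Real.sqrt 2 * t) := by
      rw [htre]
      field_simp
    rw [hid, abs_mul, abs_of_pos (by positivity : (0:ℝ) < Real.sqrt 2 * t)]
    calc |(P2 μ (Complex.I * s)).re - (tgt s).re| * (Real.sqrt 2 * t)
        ≤ (K * |s| ^ (-(3:ℝ)/2)) * (Real.sqrt 2 * t) :=
          mul_le_mul_of_nonneg_right hsubre (by positivity)
    _ = Real.sqrt 2 * K / |s| := by
        rw [rpow_neg_three_half (abs_nonneg s), ← htdef, ← hts]
        field_simp
  -- bullets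
  refine ⟨⟨K, R, hK0, hR0, ?_, ?_⟩, ?_, ?_⟩
  · intro s hs
    have hs0 : (0:ℝ) < s := lt_of_lt_of_le hR0 hs
    have habs : |s| = s := abs_of_pos hs0
    have h := hkey s (by rw [habs]; exact hs)
    have htg : tgt s = (1 - Complex.I) / ((Real.sqrt 2 : ℂ) * (Real.sqrt s : ℂ)) := by
      unfold tgt
      rw [if_pos hs0, habs]
      norm_num
    rwa [htg] at h
  · intro s hs
    have hs0 : s < 0 := by linarith
    have habs : |s| = -s := abs_of_neg hs0
    have h := hkey s (by rw [habs]; linarith)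
    have htg : tgt s = (1 + Complex.I) / ((Real.sqrt 2 : ℂ) * (Real.sqrt |s| : ℂ)) := by
      unfold tgt
      rw [if_neg (by linarith : ¬ (0:ℝ) < s)]
      norm_num
    rwa [htg] at h
  -- tendsto atTop
  · have h1 : Tendsto (fun s : ℝ => Real.sqrt 2 * K / |s|) atTop (nhds 0) := by
      have h2 : Tendsto (fun s : ℝ => |s|) atTop atTop := tendsto_abs_atTop_atTop
      have h3 : Tendsto (fun s : ℝ => (|s|)⁻¹) atTop (nhds 0) := h2.inv_tendsto_atTop
      have h4 := h3.const_mul (Real.sqrt 2 * K)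
      rw [mul_zero] at h4
      simpa [div_eq_mul_inv] using h4
    have h2 : Tendsto (fun s : ℝ =>
        (P2 μ (Complex.I * s)).re * (Real.sqrt 2 * Real.sqrt |s|) - 1) atTop (nhds 0) := by
      apply squeeze_zero_norm' _ h1
      filter_upwards [eventually_ge_atTop R] with s hs
      have : R ≤ |s| := le_trans hs (le_abs_self s)
      simpa [Real.norm_eq_abs] using hre s this
    have h3 := h2.add_const 1
    simpa using h3
  · have h1 : Tendsto (fun s : ℝ => Real.sqrt 2 * K / |s|) atBot (nhds 0) := by
      have h2 : Tendsto (fun s : ℝ => |s|) atBot atTop := tendsto_abs_atBot_atTop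
      have h3 : Tendsto (fun s : ℝ => (|s|)⁻¹) atBot (nhds 0) := h2.inv_tendsto_atTop
      have h4 := h3.const_mul (Real.sqrt 2 * K)
      rw [mul_zero] at h4
      simpa [div_eq_mul_inv] using h4
    have h2 : Tendsto (fun s : ℝ =>
        (P2 μ (Complex.I * s)).re * (Real.sqrt 2 * Real.sqrt |s|) - 1) atBot (nhds 0) := by
      apply squeeze_zero_norm' _ h1
      filter_upwards [eventually_le_atBot (-R)] with s hs
      have : R ≤ |s| := le_trans (by linarith) (neg_le_abs s)
      simpa [Real.norm_eq_abs] using hre s this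
    have h3 := h2.add_const 1
    simpa using h3
end

section
/- Let (T(t))_{t≥0} be a contraction semigroup with generator A on a Hilbert space Z such that σ(A) ⊂ {Re λ < 0} and limsup_{s→∞} s^{−1/2} ‖R(is, A)‖ > 0. Then for every non-increasing function r : [0,∞) → (0,∞) with r(t) = o(t^{−2}) as t → ∞, there exists z₀ ∈ D(A) such that limsup_{t→∞} ‖T(t)z₀‖ / r(t) = ∞. -/
open Complex Set Filter Asymptotics


lemma sg_deriv {Z : Type*} [NormedAddCommGroup Z] [NormedSpace ℂ Z]
    (dom : Submodule ℂ Z) (A : dom →ₗ[ℂ] Z) (T : ℝ → Z →L[ℂ] Z)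
    (hT0 : T 0 = ContinuousLinearMap.id ℂ Z)
    (hTsem : ∀ s ≥ (0 : ℝ), ∀ t ≥ (0 : ℝ), T (s + t) = (T s).comp (T t))
    (hgen : ∀ z : dom, HasDerivWithinAt (fun t => T t (z : Z)) (A z) (Ici 0) 0)
    (z : dom) (x : ℝ) (hx : 0 ≤ x) :
    HasDerivWithinAt (fun t => T t (z : Z)) (T x (A z)) (Ici x) x := by
  have hinner : HasDerivWithinAt (fun u : ℝ => u - x) 1 (Ici x) x := by
    simpa using (hasDerivWithinAt_id x (Ici x)).sub_const x
  have hmaps : MapsTo (fun u : ℝ => u - x) (Ici x) (Ici 0) := fun u hu => by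
    simp only [mem_Ici] at *; linarith
  have hcomp : HasDerivWithinAt (fun u : ℝ => T (u - x) (z : Z)) (A z) (Ici x) x := by
    have := (hgen z).scomp_of_eq (h := fun u : ℝ => u - x) x hinner hmaps (by simp)
    simpa [Function.comp_def] using this
  have h2 : HasDerivWithinAt (fun u : ℝ => T x (T (u - x) (z : Z))) (T x (A z)) (Ici x) x := by
    have := ((T x).restrictScalars ℝ).hasFDerivAt.comp_hasDerivWithinAt_of_eq
      (f := fun u : ℝ => T (u - x) (z : Z)) x hcomp (by rfl)
    simpa [Function.comp_def] using this
  refine h2.congr (fun u hu => ?_) (by simp [hT0])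
  have h := hTsem x hx (u - x) (by simp only [mem_Ici] at hu; linarith)
  have h3 : T (x + (u - x)) (z : Z) = T x (T (u - x) (z : Z)) := by rw [h]; rfl
  rw [← h3]; ring_nf

lemma res_point_est {Z : Type*} [NormedAddCommGroup Z] [NormedSpace ℂ Z] [CompleteSpace Z]
    (dom : Submodule ℂ Z) (A : dom →ₗ[ℂ] Z) (T : ℝ → Z →L[ℂ] Z)
    (hT0 : T 0 = ContinuousLinearMap.id ℂ Z)
    (hTsem : ∀ s ≥ (0 : ℝ), ∀ t ≥ (0 : ℝ), T (s + t) = (T s).comp (T t))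
    (hTcontr : ∀ t ≥ (0 : ℝ), ‖T t‖ ≤ 1)
    (hTcont : ∀ z : Z, ContinuousOn (fun t => T t z) (Ici 0))
    (hgen : ∀ z : dom, HasDerivWithinAt (fun t => T t (z : Z)) (A z) (Ici 0) 0)
    (s : ℝ) (z : dom) (y : Z) (hz : ((s : ℂ) * Complex.I) • (z : Z) - A z = y)
    (τ : ℝ) (hτ : 0 ≤ τ) :
    ‖(z : Z)‖ ≤ τ * ‖y‖ + ‖T τ (z : Z)‖ := by
  set c : ℝ → ℂ := fun t => Complex.exp (-((s : ℂ) * I) * t) with hc_def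
  have hcnorm : ∀ t : ℝ, ‖c t‖ = 1 := by
    intro t
    simp only [hc_def, Complex.norm_exp]
    simp [Complex.mul_re]
  have hcderiv : ∀ x : ℝ, HasDerivAt c (-((s : ℂ) * I) * c x) x := by
    intro x
    have h1 : HasDerivAt (fun t : ℝ => ((t : ℝ) : ℂ)) 1 x := by
      simpa using (hasDerivAt_id x).ofReal_comp
    have h2 : HasDerivAt (fun t : ℝ => -((s : ℂ) * I) * t) (-((s : ℂ) * I)) x := by
      simpa using h1.const_mul (-((s : ℂ) * I))
    simpa [hc_def, mul_comm] using h2.cexp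
  have hAz : A z = ((s : ℂ) * I) • (z : Z) - y := by
    rw [← hz]; exact (sub_sub_cancel _ _).symm
  have hccont : Continuous c :=
    Complex.continuous_exp.comp (continuous_const.mul Complex.continuous_ofReal)
  set g : ℝ → Z := fun t => c t • T t (z : Z) with hg_def
  set g' : ℝ → Z := fun t => -(c t) • T t y with hg'_def
  have hderiv : ∀ x ∈ Ioo 0 τ, HasDerivWithinAt g (g' x) (Ioi x) x := by
    intro x hx
    have hF : HasDerivWithinAt (fun t => T t (z : Z)) (T x (A z)) (Ioi x) x :=
      (sg_deriv dom A T hT0 hTsem hgen z x hx.1.le).mono Ioi_subset_Ici_self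
    have := ((hcderiv x).hasDerivWithinAt (s := Ioi x)).smul hF
    convert this using 1
    · rfl
    rw [hAz]
    simp only [map_sub, map_smul]
    simp only [smul_smul, smul_sub, neg_smul, neg_mul]
    module
  have hcont : ContinuousOn g (Icc 0 τ) := by
    refine ContinuousOn.smul ?_ ((hTcont (z : Z)).mono (fun u hu => hu.1))
    exact hccont.continuousOn
  have hint : IntervalIntegrable g' MeasureTheory.volume 0 τ := by
    refine ContinuousOn.intervalIntegrable ?_
    rw [uIcc_of_le hτ]
    refine ContinuousOn.smul ?_ ((hTcont y).mono (fun u hu => hu.1))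
    exact hccont.neg.continuousOn
  have hftc := intervalIntegral.integral_eq_sub_of_hasDeriv_right_of_le hτ hcont hderiv hint
  have hg0 : g 0 = (z : Z) := by simp [hg_def, hc_def, hT0]
  have hkey : (z : Z) = c τ • T τ (z : Z) + ∫ t in (0:ℝ)..τ, (c t • T t y) := by
    have : ∫ t in (0:ℝ)..τ, g' t = -∫ t in (0:ℝ)..τ, (c t • T t y) := by
      rw [← intervalIntegral.integral_neg]
      congr 1 with t
      simp [hg'_def]
    rw [this] at hftc
    have h4 : g τ = -(∫ t in (0:ℝ)..τ, (c t • T t y)) + g 0 :=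
      sub_eq_iff_eq_add.mp hftc.symm
    rw [hg0] at h4
    have h5 : (z : Z) = g τ + ∫ t in (0:ℝ)..τ, (c t • T t y) := by rw [h4]; abel
    conv_lhs => rw [h5]
  have hIτ : ‖∫ t in (0:ℝ)..τ, (c t • T t y)‖ ≤ ‖y‖ * |τ - 0| := by
    refine intervalIntegral.norm_integral_le_of_norm_le_const (fun x hx => ?_)
    rw [uIoc_of_le hτ] at hx
    rw [norm_smul, hcnorm]
    have := (T x).le_opNorm y
    have h1 := hTcontr x hx.1.le
    nlinarith [norm_nonneg y, norm_nonneg (T x y), norm_nonneg (T x)]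
  calc ‖(z : Z)‖ = ‖c τ • T τ (z : Z) + ∫ t in (0:ℝ)..τ, (c t • T t y)‖ := by rw [← hkey]
    _ ≤ ‖c τ • T τ (z : Z)‖ + ‖∫ t in (0:ℝ)..τ, (c t • T t y)‖ := norm_add_le _ _
    _ ≤ ‖T τ (z : Z)‖ + ‖y‖ * |τ - 0| := by
        rw [norm_smul, hcnorm, one_mul]
        linarith
    _ ≤ τ * ‖y‖ + ‖T τ (z : Z)‖ := by
        rw [_root_.abs_of_nonneg (by linarith : (0:ℝ) ≤ τ - 0)]
        nlinarith [norm_nonneg y]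

section Main
variable {Z : Type*} [NormedAddCommGroup Z] [NormedSpace ℂ Z]

theorem stmt18_main [CompleteSpace Z]
    (dom : Submodule ℂ Z) (A : dom →ₗ[ℂ] Z)
    (T : ℝ → Z →L[ℂ] Z)
    (hT0 : T 0 = ContinuousLinearMap.id ℂ Z)
    (hTsem : ∀ s ≥ (0 : ℝ), ∀ t ≥ (0 : ℝ), T (s + t) = (T s).comp (T t))
    (hTcontr : ∀ t ≥ (0 : ℝ), ‖T t‖ ≤ 1)
    (hTcont : ∀ z : Z, ContinuousOn (fun t => T t z) (Ici 0))
    (hgen : ∀ z : dom, HasDerivWithinAt (fun t => T t (z : Z)) (A z) (Ici 0) 0)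
    (res : ℂ → Z →L[ℂ] Z)
    (hres : ∀ lam : ℂ, 0 ≤ lam.re →
      (∀ y : Z, ∃ h : res lam y ∈ dom, lam • (res lam y) - A ⟨res lam y, h⟩ = y) ∧
      (∀ z : dom, res lam (lam • (z : Z) - A z) = (z : Z)))
    (hlimsup : ∃ c > (0 : ℝ), ∀ s₀ : ℝ, ∃ s ≥ s₀, 0 < s ∧
      c * Real.sqrt s ≤ ‖res ((s : ℂ) * Complex.I)‖) :
    ∀ r : ℝ → ℝ, (∀ t, 0 < r t) → Antitone r →
      (fun t => r t) =o[atTop] (fun t : ℝ => t ^ (-2 : ℝ)) →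
      ∃ z₀ : dom, ∀ M : ℝ, ∀ t₀ : ℝ, ∃ t ≥ t₀, M ≤ ‖T t (z₀ : Z)‖ / r t := by
  intro r hrpos hrmono hro
  by_contra hcon
  push_neg at hcon
  -- Step 1: uniform boundedness
  set g : {t : ℝ // 0 ≤ t} → Z →L[ℂ] Z :=
    fun t => (r t.1)⁻¹ • ((T t.1).comp (res 0)) with hg_def
  have hgnorm : ∀ (t : {t : ℝ // 0 ≤ t}) (y : Z),
      ‖g t y‖ = ‖T t.1 (res 0 y)‖ / r t.1 := by
    intro t y
    simp only [hg_def, ContinuousLinearMap.smul_apply, ContinuousLinearMap.coe_comp',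
      Function.comp_apply, norm_smul, Real.norm_eq_abs,
      abs_of_pos (inv_pos.mpr (hrpos t.1))]
    rw [inv_mul_eq_div]
  have hpt : ∀ y : Z, ∃ Cy, ∀ t : {t : ℝ // 0 ≤ t}, ‖g t y‖ ≤ Cy := by
    intro y
    obtain ⟨hy, -⟩ := (hres 0 (by norm_num)).1 y
    obtain ⟨M, t₀, hM⟩ := hcon ⟨res 0 y, hy⟩
    refine ⟨max M (‖res 0 y‖ / r (max t₀ 0)), fun t => ?_⟩
    rw [hgnorm]
    rcases le_or_gt (max t₀ 0) t.1 with h | h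
    · refine le_trans (le_of_lt ?_) (le_max_left _ _)
      exact hM t.1 (le_trans (le_max_left _ _) h)
    · refine le_trans ?_ (le_max_right _ _)
      refine div_le_div₀ (norm_nonneg _) ?_ (hrpos _) (hrmono h.le)
      calc ‖T t.1 (res 0 y)‖ ≤ ‖T t.1‖ * ‖res 0 y‖ := (T t.1).le_opNorm _
        _ ≤ 1 * ‖res 0 y‖ := by
            exact mul_le_mul_of_nonneg_right (hTcontr t.1 t.2) (norm_nonneg _)
        _ = ‖res 0 y‖ := one_mul _
  obtain ⟨C', hC'⟩ := banach_steinhaus hpt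
  set C := max C' 1 with hC_def
  have hC1 : (1 : ℝ) ≤ C := le_max_right _ _
  have hCpos : (0 : ℝ) < C := by linarith
  have hTres : ∀ t, 0 ≤ t → ∀ y : Z, ‖T t (res 0 y)‖ ≤ C * r t * ‖y‖ := by
    intro t ht y
    have h1 : ‖g ⟨t, ht⟩ y‖ ≤ C * ‖y‖ :=
      le_trans ((g ⟨t, ht⟩).le_opNorm y)
        (mul_le_mul_of_nonneg_right (le_trans (hC' ⟨t, ht⟩) (le_max_left _ _)) (norm_nonneg _))
    rw [hgnorm] at h1
    rw [div_le_iff₀ (hrpos t)] at h1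
    calc ‖T t (res 0 y)‖ ≤ C * ‖y‖ * r t := h1
      _ = C * r t * ‖y‖ := by ring
  -- Step 2: resolvent norm estimate
  have hresop : ∀ s : ℝ, 0 < s → ∀ τ : ℝ, 0 ≤ τ → C * r τ * s ≤ 1/2 →
      ‖res ((s : ℂ) * Complex.I)‖ ≤ 2*τ + 2*C*(r τ) := by
    intro s hs τ hτ hsmall
    have hbnd : (0:ℝ) ≤ 2*τ + 2*C*(r τ) := by
      have := hrpos τ; positivity
    refine ContinuousLinearMap.opNorm_le_bound _ hbnd (fun y => ?_)
    have hre : (0:ℝ) ≤ ((s : ℂ) * Complex.I).re := by simp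
    obtain ⟨hw, hweq⟩ := (hres ((s : ℂ) * Complex.I) hre).1 y
    set w := res ((s : ℂ) * Complex.I) y with hw_def
    have h1 : ‖w‖ ≤ τ * ‖y‖ + ‖T τ w‖ := by
      have := res_point_est dom A T hT0 hTsem hTcontr hTcont hgen s ⟨w, hw⟩ y hweq τ hτ
      simpa using this
    have hA : A ⟨w, hw⟩ = ((s : ℂ) * Complex.I) • w - y := by
      rw [← hweq]; exact (sub_sub_cancel _ _).symm
    have h2 : res 0 (y - ((s : ℂ) * Complex.I) • w) = w := by
      have h := (hres 0 (by norm_num)).2 ⟨w, hw⟩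
      rw [hA] at h
      simpa using h
    have hnorm_sI : ‖((s : ℂ) * Complex.I)‖ = s := by
      rw [norm_mul, Complex.norm_real, Complex.norm_I, mul_one,
        Real.norm_eq_abs, abs_of_pos hs]
    have h3 : ‖T τ w‖ ≤ C * r τ * (‖y‖ + s * ‖w‖) := by
      conv_lhs => rw [← h2]
      calc ‖T τ (res 0 (y - ((s : ℂ) * Complex.I) • w))‖
          ≤ C * r τ * ‖y - ((s : ℂ) * Complex.I) • w‖ := hTres τ hτ _
        _ ≤ C * r τ * (‖y‖ + s * ‖w‖) := by
            refine mul_le_mul_of_nonneg_left ?_ (mul_pos hCpos (hrpos τ)).le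
            calc ‖y - ((s : ℂ) * Complex.I) • w‖ ≤ ‖y‖ + ‖((s : ℂ) * Complex.I) • w‖ :=
                norm_sub_le _ _
              _ = ‖y‖ + s * ‖w‖ := by rw [norm_smul, hnorm_sI]
    have hh := mul_le_mul_of_nonneg_right hsmall (norm_nonneg w)
    nlinarith [norm_nonneg w, norm_nonneg y, hrpos τ]
  -- Step 3: numerics
  obtain ⟨c, hc, hls⟩ := hlimsup
  set ε := c^2 / (32*C) with hε_def
  have hεpos : 0 < ε := by positivity
  have hev := hro.def hεpos
  obtain ⟨Tε, hTε⟩ := eventually_atTop.mp hev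
  obtain ⟨s, hs₀, hspos, hsR⟩ := hls (max (max 1 (8/c^2)) (16*Tε^2/c^2))
  have hs1 : (1:ℝ) ≤ s := le_trans (le_trans (le_max_left _ _) (le_max_left _ _)) hs₀
  have hs8 : 8/c^2 ≤ s := le_trans (le_trans (le_max_right _ _) (le_max_left _ _)) hs₀
  have hsT : 16*Tε^2/c^2 ≤ s := le_trans (le_max_right _ _) hs₀
  set τ := c/4 * Real.sqrt s with hτ_def
  have hsqrt : Real.sqrt s ^ 2 = s := Real.sq_sqrt hspos.le
  have hsqrtpos : 0 < Real.sqrt s := Real.sqrt_pos.mpr hspos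
  have hτpos : 0 < τ := by positivity
  have hτ2eq : τ^2 = c^2 * s / 16 := by
    rw [hτ_def, mul_pow, hsqrt]; ring
  have hτ2 : Tε^2 ≤ τ^2 := by
    rw [hτ2eq]
    rw [div_le_iff₀ (pow_pos hc 2)] at hsT
    nlinarith
  have hτT : Tε ≤ τ := by
    calc Tε ≤ |Tε| := le_abs_self _
      _ = Real.sqrt (Tε^2) := (Real.sqrt_sq_eq_abs _).symm
      _ ≤ Real.sqrt (τ^2) := Real.sqrt_le_sqrt hτ2
      _ = |τ| := Real.sqrt_sq_eq_abs _
      _ = τ := abs_of_pos hτpos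
  have hrτ : r τ ≤ 1/(2*C*s) := by
    have h := hTε τ hτT
    simp only [Real.norm_eq_abs] at h
    rw [abs_of_pos (hrpos τ)] at h
    have hrpow : τ ^ (-2:ℝ) = (τ^2)⁻¹ := by
      rw [show (-2:ℝ) = -(2:ℕ) by norm_num, Real.rpow_neg hτpos.le, Real.rpow_natCast]
    rw [hrpow, abs_of_pos (by positivity : (0:ℝ) < (τ^2)⁻¹)] at h
    calc r τ ≤ ε * (τ^2)⁻¹ := h
      _ = 1/(2*C*s) := by
          rw [hε_def, hτ2eq]
          field_simp
          ring
  have hCrs : C * r τ * s ≤ 1/2 := by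
    have h := mul_le_mul_of_nonneg_left hrτ (le_of_lt (mul_pos hCpos hspos))
    have he : C * s * (1/(2*C*s)) = 1/2 := by field_simp
    calc C * r τ * s = C * s * r τ := by ring
      _ ≤ C * s * (1/(2*C*s)) := h
      _ = 1/2 := he
  have hbound := hresop s hspos τ hτpos.le hCrs
  have h2Crτ : 2*C*(r τ) ≤ 1/s := by
    have h := mul_le_mul_of_nonneg_left hrτ (by positivity : (0:ℝ) ≤ 2*C)
    calc 2*C*(r τ) ≤ 2*C*(1/(2*C*s)) := h
      _ = 1/s := by field_simp
  have h1s : 1/s ≤ 1 := by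
    rw [div_le_one hspos]; exact hs1
  have hfin : c * Real.sqrt s ≤ c/4 * Real.sqrt s * 2 + 1 := by
    calc c * Real.sqrt s ≤ ‖res ((s : ℂ) * Complex.I)‖ := hsR
      _ ≤ 2*τ + 2*C*(r τ) := hbound
      _ ≤ 2*(c/4 * Real.sqrt s) + 1/s := by rw [← hτ_def]; linarith
      _ ≤ c/4 * Real.sqrt s * 2 + 1 := by linarith
  have hcs : c * Real.sqrt s ≤ 2 := by linarith
  have hs8' : 8 ≤ s * c^2 := (div_le_iff₀ (pow_pos hc 2)).mp hs8
  have hsq := mul_le_mul hcs hcs (by positivity) (by norm_num)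
  nlinarith [hsq, hsqrt, hs8']

end Main


/-- Let `(T(t))` be a contraction semigroup with generator `A` (domain `dom`) on a
complex Hilbert space `Z` such that `σ(A) ⊂ {Re λ < 0}` (i.e. every `λ` with
`Re λ ≥ 0` has a bounded two-sided resolvent `res λ`) and
`limsup_{s→∞} s^{−1/2} ‖R(is,A)‖ > 0`.  Then for every non-increasing
`r : [0,∞) → (0,∞)` with `r(t) = o(t^{−2})` there is `z₀ ∈ D(A)` with
`limsup_{t→∞} ‖T(t)z₀‖/r(t) = ∞`. -/
theorem stmt18 {Z : Type*} [NormedAddCommGroup Z] [InnerProductSpace ℂ Z] [CompleteSpace Z]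
    (dom : Submodule ℂ Z) (A : dom →ₗ[ℂ] Z)
    (hdense : Dense (dom : Set Z))
    (T : ℝ → Z →L[ℂ] Z)
    (hT0 : T 0 = ContinuousLinearMap.id ℂ Z)
    (hTsem : ∀ s ≥ (0 : ℝ), ∀ t ≥ (0 : ℝ), T (s + t) = (T s).comp (T t))
    (hTcontr : ∀ t ≥ (0 : ℝ), ‖T t‖ ≤ 1)
    (hTcont : ∀ z : Z, ContinuousOn (fun t => T t z) (Ici 0))
    (hgen : ∀ z : dom, HasDerivWithinAt (fun t => T t (z : Z)) (A z) (Ici 0) 0)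
    (res : ℂ → Z →L[ℂ] Z)
    (hres : ∀ lam : ℂ, 0 ≤ lam.re →
      (∀ y : Z, ∃ h : res lam y ∈ dom, lam • (res lam y) - A ⟨res lam y, h⟩ = y) ∧
      (∀ z : dom, res lam (lam • (z : Z) - A z) = (z : Z)))
    (hlimsup : ∃ c > (0 : ℝ), ∀ s₀ : ℝ, ∃ s ≥ s₀, 0 < s ∧
      c * Real.sqrt s ≤ ‖res ((s : ℂ) * Complex.I)‖) :
    ∀ r : ℝ → ℝ, (∀ t, 0 < r t) → Antitone r →
      (fun t => r t) =o[atTop] (fun t : ℝ => t ^ (-2 : ℝ)) →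
      ∃ z₀ : dom, ∀ M : ℝ, ∀ t₀ : ℝ, ∃ t ≥ t₀, M ≤ ‖T t (z₀ : Z)‖ / r t := by
  exact stmt18_main dom A T hT0 hTsem hTcontr hTcont hgen res hres hlimsup
end
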